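/- arXiv:2011.09405 — 5 statements merged into one kernel-verified Lean document; each statement's English description precedes it below -/
import Mathlib

section
/- Let τ ∈ F with Im τ ≥ 3. Then |j(τ)| ≥ 10⁸, 0.98·|j(τ)|² ≤ |j(2τ)| ≤ 1.02·|j(τ)|², and 0.83·|j(τ)|^{1/2} ≤ |j(τ/2)| ≤ 1.17·|j(τ)|^{1/2} and 0.83·|j(τ)|^{1/2} ≤ |j((τ+1)/2)| ≤ 1.17·|j(τ)|^{1/2}. -/
open Complex Real Filter

/-- The normalized Eisenstein series `E₄`, via its `q`-expansion
`E₄(τ) = 1 + 240 ∑_{n≥1} σ₃(n) qⁿ`, `q = exp(2πiτ)`. -/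
noncomputable def E4 (τ : ℂ) : ℂ :=
  1 + 240 * ∑' n : ℕ, (∑ d ∈ (n + 1).divisors, (d : ℂ) ^ 3) *
    Complex.exp (2 * Real.pi * Complex.I * τ) ^ (n + 1)

/-- The normalized Eisenstein series `E₆`, via its `q`-expansion
`E₆(τ) = 1 - 504 ∑_{n≥1} σ₅(n) qⁿ`, `q = exp(2πiτ)`. -/
noncomputable def E6 (τ : ℂ) : ℂ :=
  1 - 504 * ∑' n : ℕ, (∑ d ∈ (n + 1).divisors, (d : ℂ) ^ 5) *
    Complex.exp (2 * Real.pi * Complex.I * τ) ^ (n + 1)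

/-- The Klein `j`-invariant, `j = 1728 E₄³ / (E₄³ - E₆²)`. -/
noncomputable def klj (τ : ℂ) : ℂ := 1728 * E4 τ ^ 3 / (E4 τ ^ 3 - E6 τ ^ 2)

/-- The usual fundamental domain `F` of the modular group:
`{z : -1/2 < Re z ≤ 1/2, |z| > 1} ∪ {z : |z| = 1, Re z ≥ 0}` (inside the upper half-plane). -/
def Fdom : Set ℂ :=
  {z | 0 < z.im ∧ ((-1/2 < z.re ∧ z.re ≤ 1/2 ∧ 1 < ‖z‖) ∨
    (‖z‖ = 1 ∧ 0 ≤ z.re))}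

/-- The level-2 modular polynomial `Φ₂(X,Y)`. -/
def Phi2 (X Y : ℂ) : ℂ :=
  X ^ 3 + Y ^ 3 - X ^ 2 * Y ^ 2 + 1488 * X ^ 2 * Y + 1488 * X * Y ^ 2
    - 162000 * X ^ 2 - 162000 * Y ^ 2 + 40773375 * X * Y
    + 8748000000 * X + 8748000000 * Y - 157464000000000

lemma pow_le_hundred (k : ℕ) (hk : k ≤ 6) : ∀ n : ℕ, ((n:ℝ)+1)^k ≤ 100^n := by
  intro n
  induction n with
  | zero => norm_num
  | succ m ih =>
    have h1 : ((m:ℝ)+1+1)^k ≤ 2^k*((m:ℝ)+1)^k := by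
      rw [← mul_pow]
      apply pow_le_pow_left₀ (by positivity) (by linarith)
    have h2 : (2:ℝ)^k ≤ 100 := by
      calc (2:ℝ)^k ≤ 2^6 := pow_le_pow_right₀ (by norm_num) hk
      _ ≤ 100 := by norm_num
    have h3 : (0:ℝ) ≤ ((m:ℝ)+1)^k := by positivity
    have h4 : ((m:ℝ)+1)^k ≤ 100^m := ih
    push_cast
    calc ((m:ℝ)+1+1)^k ≤ 2^k*((m:ℝ)+1)^k := h1
      _ ≤ 100 * 100^m := by nlinarith [pow_nonneg (by norm_num : (0:ℝ) ≤ 2) k]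
      _ = 100^(m+1) := by ring

lemma coeff_bound (k n : ℕ) (hk : k + 1 ≤ 6) :
    ‖∑ d ∈ (n+1).divisors, (d:ℂ)^k‖ ≤ 100^n := by
  have hcard : (n+1).divisors.card ≤ n+1 := by
    have := Finset.card_filter_le (Finset.Ico 1 (n+1+1)) (· ∣ (n+1))
    rw [Nat.divisors]; simpa using this
  calc ‖∑ d ∈ (n+1).divisors, (d:ℂ)^k‖ ≤ ∑ d ∈ (n+1).divisors, ‖(d:ℂ)^k‖ :=
        norm_sum_le _ _
    _ = ∑ d ∈ (n+1).divisors, ((d:ℝ))^k := by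
        simp [norm_pow]
    _ ≤ ∑ d ∈ (n+1).divisors, ((n:ℝ)+1)^k := by
        apply Finset.sum_le_sum
        intro d hd
        have hdle : (d:ℝ) ≤ (n:ℝ)+1 := by exact_mod_cast Nat.divisor_le hd
        exact pow_le_pow_left₀ (by positivity) hdle k
    _ = (n+1).divisors.card * ((n:ℝ)+1)^k := by
        rw [Finset.sum_const, nsmul_eq_mul]
    _ ≤ ((n:ℝ)+1) * ((n:ℝ)+1)^k := by
        apply mul_le_mul_of_nonneg_right _ (by positivity)
        exact_mod_cast hcard
    _ = ((n:ℝ)+1)^(k+1) := by ring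
    _ ≤ 100^n := pow_le_hundred (k+1) hk n

set_option maxHeartbeats 1000000 in
lemma series_est (a : ℕ → ℂ) (ha : ∀ n, ‖a n‖ ≤ 100 ^ n) (ha0 : a 0 = 1)
    (q : ℂ) (hq : ‖q‖ ≤ 1e-4) :
    Summable (fun n => a n * q ^ (n+1)) ∧ ‖(∑' n : ℕ, a n * q ^ (n+1)) - q‖ ≤ 102 * ‖q‖^2 := by
  set x := ‖q‖ with hx
  have hx0 : 0 ≤ x := norm_nonneg q
  have hr0 : (0:ℝ) ≤ 100*x := by positivity
  have hr1 : 100*x < 1 := by rw [hx] at hq ⊢; nlinarith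
  have hbound : ∀ n, ‖a n * q^(n+1)‖ ≤ x * (100*x)^n := by
    intro n
    rw [norm_mul, norm_pow]
    calc ‖a n‖ * x^(n+1) ≤ 100^n * x^(n+1) := by
          apply mul_le_mul_of_nonneg_right (ha n) (by positivity)
      _ = x * (100*x)^n := by rw [mul_pow]; ring
  have hgeo : Summable (fun n : ℕ => x * (100*x)^n) :=
    (summable_geometric_of_lt_one hr0 hr1).mul_left x
  have hnorm_summ : Summable (fun n => ‖a n * q^(n+1)‖) :=
    Summable.of_nonneg_of_le (fun n => norm_nonneg _) hbound hgeo
  have hsumm : Summable (fun n => a n * q^(n+1)) := hnorm_summ.of_norm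
  refine ⟨hsumm, ?_⟩
  have hshift := hsumm.tsum_eq_zero_add
  rw [hshift, ha0]
  have hsimp : 1 * q^(0+1) + (∑' n : ℕ, a (n+1) * q^(n+1+1)) - q
      = ∑' n : ℕ, a (n+1) * q^(n+1+1) := by ring
  rw [hsimp]
  have htail_norm : Summable (fun n => ‖a (n+1) * q^(n+1+1)‖) :=
    (summable_nat_add_iff 1).2 hnorm_summ
  have hgeo' : Summable (fun n : ℕ => x * (100*x)^(n+1)) :=
    (summable_nat_add_iff 1).2 hgeo
  calc ‖∑' n : ℕ, a (n+1) * q^(n+1+1)‖ ≤ ∑' n : ℕ, ‖a (n+1) * q^(n+1+1)‖ :=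
        norm_tsum_le_tsum_norm htail_norm
    _ ≤ ∑' n : ℕ, x * (100*x)^(n+1) := by
        apply Summable.tsum_le_tsum (fun n => hbound (n+1)) htail_norm hgeo'
    _ = (x * (100*x)) * ∑' n : ℕ, (100*x)^n := by
        rw [← tsum_mul_left]
        congr 1; ext n; ring
    _ = (x * (100*x)) * (1 - 100*x)⁻¹ := by rw [tsum_geometric_of_lt_one hr0 hr1]
    _ ≤ 102 * x^2 := by
        rw [mul_inv_le_iff₀ (by linarith)]
        nlinarith

lemma exp_3pi : (11500:ℝ) ≤ Real.exp (3*Real.pi) := by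
  have h9 : (8103:ℝ) ≤ Real.exp 9 := by
    have h : Real.exp 9 = Real.exp 1 ^ 9 := by
      rw [← Real.exp_nat_mul]; norm_num
    rw [h]
    have h1 : (2.7182818283:ℝ) ≤ Real.exp 1 := le_of_lt Real.exp_one_gt_d9
    calc (8103:ℝ) ≤ 2.7182818283^9 := by norm_num
      _ ≤ Real.exp 1 ^ 9 := pow_le_pow_left₀ (by norm_num) h1 9
  have h42 : (1.42:ℝ) ≤ Real.exp 0.42 := by
    have := Real.add_one_le_exp (0.42:ℝ); linarith
  have hpi : (3.141592:ℝ) < Real.pi := Real.pi_gt_d6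
  have hmono : Real.exp (9 + 0.42) ≤ Real.exp (3*Real.pi) :=
    Real.exp_le_exp.2 (by linarith)
  rw [Real.exp_add] at hmono
  nlinarith [Real.exp_pos (9:ℝ), Real.exp_pos (0.42:ℝ)]

lemma abs_exp_eq (σ : ℂ) : ‖Complex.exp (2 * Real.pi * Complex.I * σ)‖
    = Real.exp (-(2*Real.pi*σ.im)) := by
  rw [Complex.norm_exp]
  congr 1
  simp [Complex.mul_re, Complex.mul_im]

set_option maxHeartbeats 2000000 in
lemma jq_est (σ : ℂ) (him : 3/2 ≤ σ.im) :
    ‖klj σ * Complex.exp (2 * Real.pi * Complex.I * σ) - 1‖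
      ≤ 1250 * ‖Complex.exp (2 * Real.pi * Complex.I * σ)‖ := by
  set q : ℂ := Complex.exp (2 * Real.pi * Complex.I * σ) with hqdef
  set x : ℝ := ‖q‖ with hxdef
  have hxpos : 0 < x := norm_pos_iff.2 (Complex.exp_ne_zero _)
  have hxe : x = Real.exp (-(2*Real.pi*σ.im)) := abs_exp_eq σ
  have hxle : x ≤ 1e-4 := by
    rw [hxe]
    have h1 : Real.exp (-(2*Real.pi*σ.im)) ≤ Real.exp (-(3*Real.pi)) := by
      apply Real.exp_le_exp.2
      have hpi : (0:ℝ) < Real.pi := Real.pi_pos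
      nlinarith
    have h2 : Real.exp (-(3*Real.pi)) = (Real.exp (3*Real.pi))⁻¹ := Real.exp_neg _
    have h3 := exp_3pi
    have h4 : (Real.exp (3*Real.pi))⁻¹ ≤ (11500:ℝ)⁻¹ := by
      apply inv_anti₀ (by norm_num) h3
    calc Real.exp (-(2*Real.pi*σ.im)) ≤ (Real.exp (3*Real.pi))⁻¹ := by rw [← h2]; exact h1
      _ ≤ (11500:ℝ)⁻¹ := h4
      _ ≤ 1e-4 := by norm_num
  -- series A and B
  obtain ⟨hAsum, hA1⟩ := series_est (fun n => ∑ d ∈ (n+1).divisors, (d:ℂ)^3)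
    (fun n => coeff_bound 3 n (by norm_num)) (by simp) q hxle
  obtain ⟨hBsum, hB1⟩ := series_est (fun n => ∑ d ∈ (n+1).divisors, (d:ℂ)^5)
    (fun n => coeff_bound 5 n (by norm_num)) (by simp) q hxle
  set A : ℂ := ∑' n : ℕ, (∑ d ∈ (n+1).divisors, (d:ℂ)^3) * q^(n+1) with hAdef
  set B : ℂ := ∑' n : ℕ, (∑ d ∈ (n+1).divisors, (d:ℂ)^5) * q^(n+1) with hBdef
  have hE4 : E4 σ = 1 + 240*A := rfl
  have hE6 : E6 σ = 1 - 504*B := rfl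
  -- norm bounds
  have hA : ‖A‖ ≤ 1.011*x := by
    have : A = (A - q) + q := by ring
    rw [this]
    calc ‖(A - q) + q‖ ≤ ‖A - q‖ + ‖q‖ := norm_add_le _ _
      _ ≤ 102*x^2 + x := by rw [← hxdef]; linarith [hA1]
      _ ≤ 1.011*x := by nlinarith
  have hB : ‖B‖ ≤ 1.011*x := by
    have : B = (B - q) + q := by ring
    rw [this]
    calc ‖(B - q) + q‖ ≤ ‖B - q‖ + ‖q‖ := norm_add_le _ _
      _ ≤ 102*x^2 + x := by rw [← hxdef]; linarith [hB1]
      _ ≤ 1.011*x := by nlinarith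
  set D : ℂ := E4 σ ^ 3 - E6 σ ^ 2 with hDdef
  have hDq : D - 1728*q =
      720*(A-q) + 1008*(B-q) + 172800*A^2 - 254016*B^2 + 13824000*A^3 := by
    rw [hDdef, hE4, hE6]; ring
  have hD1 : ‖D - 1728*q‖ ≤ 616000*x^2 := by
    rw [hDq]
    have step : ‖720*(A-q) + 1008*(B-q) + 172800*A^2 - 254016*B^2 + 13824000*A^3‖
        ≤ 720*‖A-q‖ + 1008*‖B-q‖ + 172800*‖A‖^2 + 254016*‖B‖^2 + 13824000*‖A‖^3 := by
      calc ‖720*(A-q) + 1008*(B-q) + 172800*A^2 - 254016*B^2 + 13824000*A^3‖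
          ≤ ‖720*(A-q) + 1008*(B-q) + 172800*A^2 - 254016*B^2‖ + ‖13824000*A^3‖ :=
            norm_add_le _ _
        _ ≤ ‖720*(A-q) + 1008*(B-q) + 172800*A^2‖ + ‖254016*B^2‖ + ‖13824000*A^3‖ := by
            gcongr; exact norm_sub_le _ _
        _ ≤ ‖720*(A-q) + 1008*(B-q)‖ + ‖172800*A^2‖ + ‖254016*B^2‖ + ‖13824000*A^3‖ := by
            gcongr; exact norm_add_le _ _
        _ ≤ ‖720*(A-q)‖ + ‖1008*(B-q)‖ + ‖172800*A^2‖ + ‖254016*B^2‖ + ‖13824000*A^3‖ := by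
            gcongr; exact norm_add_le _ _
        _ = 720*‖A-q‖ + 1008*‖B-q‖ + 172800*‖A‖^2 + 254016*‖B‖^2 + 13824000*‖A‖^3 := by
            simp [norm_mul, norm_pow]
    refine step.trans ?_
    have hAn : 0 ≤ ‖A‖ := norm_nonneg _
    have hBn : 0 ≤ ‖B‖ := norm_nonneg _
    nlinarith [hA1, hB1, hA, hB, hxpos.le, hxle, sq_nonneg x,
      pow_le_pow_left₀ hAn hA 3, pow_le_pow_left₀ hAn hA 2, pow_le_pow_left₀ hBn hB 2]
  have hE4_1 : ‖E4 σ - 1‖ ≤ 243*x := by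
    rw [hE4]
    have : (1:ℂ) + 240*A - 1 = 240*A := by ring
    rw [this, norm_mul]
    simp only [Complex.norm_ofNat]
    nlinarith
  have hE4n : ‖E4 σ‖ ≤ 1.025 := by
    have : E4 σ = (E4 σ - 1) + 1 := by ring
    rw [this]
    calc ‖(E4 σ - 1) + 1‖ ≤ ‖E4 σ - 1‖ + ‖(1:ℂ)‖ := norm_add_le _ _
      _ ≤ 243*x + 1 := by rw [norm_one]; linarith
      _ ≤ 1.025 := by nlinarith
  have hE43 : ‖E4 σ^3 - 1‖ ≤ 760*x := by
    have hfac : E4 σ^3 - 1 = (E4 σ - 1)*(E4 σ^2 + E4 σ + 1) := by ring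
    rw [hfac, norm_mul]
    have h2 : ‖E4 σ^2 + E4 σ + 1‖ ≤ 1.025^2 + 1.025 + 1 := by
      calc ‖E4 σ^2 + E4 σ + 1‖ ≤ ‖E4 σ^2 + E4 σ‖ + ‖(1:ℂ)‖ := norm_add_le _ _
        _ ≤ ‖E4 σ^2‖ + ‖E4 σ‖ + ‖(1:ℂ)‖ := by gcongr; exact norm_add_le _ _
        _ ≤ 1.025^2 + 1.025 + 1 := by
            rw [norm_pow, norm_one]
            have h0 : (0:ℝ) ≤ ‖E4 σ‖ := norm_nonneg _
            nlinarith
    calc ‖E4 σ - 1‖ * ‖E4 σ^2 + E4 σ + 1‖ ≤ (243*x) * (1.025^2 + 1.025 + 1) := by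
          apply mul_le_mul hE4_1 h2 (norm_nonneg _) (by positivity)
      _ ≤ 760*x := by nlinarith
  have hDlow : 1600*x ≤ ‖D‖ := by
    have h1 : ‖(1728:ℂ)*q‖ - ‖D‖ ≤ ‖D - 1728*q‖ := by
      have := norm_sub_norm_le ((1728:ℂ)*q) D
      rwa [norm_sub_rev ((1728:ℂ)*q) D] at this
    have h2 : ‖(1728:ℂ)*q‖ = 1728*x := by
      rw [norm_mul, ← hxdef]
      norm_num
    nlinarith [hD1]
  have hD0 : D ≠ 0 := by
    intro h
    rw [h, norm_zero] at hDlow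
    nlinarith
  -- final
  have hklj : klj σ * q - 1 = (1728*(E4 σ)^3*q - D)/D := by
    rw [show klj σ = 1728 * E4 σ ^ 3 / D from rfl]
    field_simp
  rw [hklj, norm_div]
  have hnum : ‖1728*(E4 σ)^3*q - D‖ ≤ 1930000*x^2 := by
    have hsplit : 1728*(E4 σ)^3*q - D = 1728*q*((E4 σ)^3 - 1) + (1728*q - D) := by ring
    rw [hsplit]
    calc ‖1728*q*((E4 σ)^3 - 1) + (1728*q - D)‖
        ≤ ‖1728*q*((E4 σ)^3 - 1)‖ + ‖1728*q - D‖ := norm_add_le _ _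
      _ ≤ 1728*x*(760*x) + 616000*x^2 := by
          have e1 : ‖(1728:ℂ)*q*((E4 σ)^3 - 1)‖ = 1728*x*‖(E4 σ)^3 - 1‖ := by
            rw [norm_mul, norm_mul, ← hxdef]
            norm_num
          have e2 : ‖(1728:ℂ)*q - D‖ = ‖D - 1728*q‖ := norm_sub_rev _ _
          rw [e1, e2]
          nlinarith [hE43, hD1, hxpos.le]
      _ ≤ 1930000*x^2 := by nlinarith
  rw [div_le_iff₀ (lt_of_lt_of_le (by positivity) hDlow)]
  calc ‖1728*(E4 σ)^3*q - D‖ ≤ 1930000*x^2 := hnum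
    _ ≤ 1250*x*(1600*x) := by nlinarith
    _ ≤ 1250*‖q‖*‖D‖ := by rw [← hxdef]; nlinarith [hDlow, hxpos.le]

lemma jq_bounds (σ : ℂ) (hσ : 3/2 ≤ σ.im) :
    1 - 1250 * ‖Complex.exp (2 * Real.pi * Complex.I * σ)‖
      ≤ ‖klj σ‖ * ‖Complex.exp (2 * Real.pi * Complex.I * σ)‖ ∧
    ‖klj σ‖ * ‖Complex.exp (2 * Real.pi * Complex.I * σ)‖
      ≤ 1 + 1250 * ‖Complex.exp (2 * Real.pi * Complex.I * σ)‖ := by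
  have h := jq_est σ hσ
  set q : ℂ := Complex.exp (2 * Real.pi * Complex.I * σ) with hqdef
  have h2 : |‖klj σ * q‖ - ‖(1:ℂ)‖| ≤ ‖klj σ * q - 1‖ :=
    abs_norm_sub_norm_le _ _
  rw [norm_one, norm_mul] at h2
  have h3 := abs_le.1 (h2.trans h)
  constructor <;> linarith [h3.1, h3.2]

set_option maxHeartbeats 1000000 in
lemma real_arith (e Jτ J2 Jh Jh' : ℝ) (hepos : 0 < e) (heb : e*11500 ≤ 1)
    (hJτl : 1 - 1250*e^2 ≤ Jτ*e^2) (hJτu : Jτ*e^2 ≤ 1+1250*e^2)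
    (hJ2l : 1 - 1250*e^4 ≤ J2*e^4) (hJ2u : J2*e^4 ≤ 1+1250*e^4)
    (hJhl : 1 - 1250*e ≤ Jh*e) (hJhu : Jh*e ≤ 1+1250*e)
    (hJh'l : 1 - 1250*e ≤ Jh'*e) (hJh'u : Jh'*e ≤ 1+1250*e)
    (hJτ0 : 0 ≤ Jτ) (hJh0 : 0 ≤ Jh) (hJh'0 : 0 ≤ Jh') :
    10 ^ 8 ≤ Jτ ∧ 0.98 * Jτ^2 ≤ J2 ∧ J2 ≤ 1.02 * Jτ^2 ∧
    0.83 * Real.sqrt Jτ ≤ Jh ∧ Jh ≤ 1.17 * Real.sqrt Jτ ∧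
    0.83 * Real.sqrt Jτ ≤ Jh' ∧ Jh' ≤ 1.17 * Real.sqrt Jτ := by
  have he2 : e^2 * 132250000 ≤ 1 := by nlinarith
  have he4 : e^4 * 132250000 ≤ e^2 := by nlinarith [sq_nonneg e, sq_nonneg (e^2)]
  have he2pos : (0:ℝ) < e^2 := by positivity
  have he4pos : (0:ℝ) < e^4 := by positivity
  have h1250e : 1250*e ≤ 0.109 := by nlinarith
  have h1250e2 : 1250*e^2 ≤ 1 := by nlinarith
  have part1 : (10:ℝ)^8 ≤ Jτ := by
    have h : (10:ℝ)^8 * e^2 ≤ Jτ * e^2 := by nlinarith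
    exact le_of_mul_le_mul_right h he2pos
  have hs1 : (Jτ*e^2)*(Jτ*e^2) ≤ (1+1250*e^2)*(1+1250*e^2) :=
    mul_le_mul hJτu hJτu (by positivity) (by positivity)
  have hs2 : (1-1250*e^2)*(1-1250*e^2) ≤ (Jτ*e^2)*(Jτ*e^2) :=
    mul_le_mul hJτl hJτl (by linarith) (by positivity)
  have part2a : 0.98 * Jτ^2 ≤ J2 := by
    have h : (0.98 * Jτ^2) * e^4 ≤ J2 * e^4 := by nlinarith
    exact le_of_mul_le_mul_right h he4pos
  have part2b : J2 ≤ 1.02 * Jτ^2 := by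
    have h : J2 * e^4 ≤ (1.02 * Jτ^2) * e^4 := by nlinarith
    exact le_of_mul_le_mul_right h he4pos
  have key : ∀ J : ℝ, 0 ≤ J → 1 - 1250*e ≤ J*e → J*e ≤ 1+1250*e →
      0.83 * Real.sqrt Jτ ≤ J ∧ J ≤ 1.17 * Real.sqrt Jτ := by
    intro J hJ0 hJl hJu
    have hsh1 : (1-1250*e)*(1-1250*e) ≤ (J*e)*(J*e) :=
      mul_le_mul hJl hJl (by linarith) (by positivity)
    have hsh2 : (J*e)*(J*e) ≤ (1+1250*e)*(1+1250*e) :=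
      mul_le_mul hJu hJu (by positivity) (by positivity)
    constructor
    · have h1 : (0.83^2*Jτ) * e^2 ≤ J^2 * e^2 := by nlinarith
      have h2 : 0.83^2*Jτ ≤ J^2 := le_of_mul_le_mul_right h1 he2pos
      have h3 : Real.sqrt (0.83^2*Jτ) = 0.83*Real.sqrt Jτ := by
        rw [Real.sqrt_mul (by positivity), Real.sqrt_sq (by norm_num)]
      calc 0.83 * Real.sqrt Jτ = Real.sqrt (0.83^2*Jτ) := h3.symm
        _ ≤ Real.sqrt (J^2) := Real.sqrt_le_sqrt h2
        _ = J := Real.sqrt_sq hJ0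
    · have h1 : J^2 * e^2 ≤ (1.17^2*Jτ) * e^2 := by nlinarith
      have h2 : J^2 ≤ 1.17^2*Jτ := le_of_mul_le_mul_right h1 he2pos
      have h3 : Real.sqrt (1.17^2*Jτ) = 1.17*Real.sqrt Jτ := by
        rw [Real.sqrt_mul (by positivity), Real.sqrt_sq (by norm_num)]
      calc J = Real.sqrt (J^2) := (Real.sqrt_sq hJ0).symm
        _ ≤ Real.sqrt (1.17^2*Jτ) := Real.sqrt_le_sqrt h2
        _ = 1.17 * Real.sqrt Jτ := h3
  obtain ⟨p3a, p3b⟩ := key Jh hJh0 hJhl hJhu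
  obtain ⟨p4a, p4b⟩ := key Jh' hJh'0 hJh'l hJh'u
  exact ⟨part1, part2a, part2b, p3a, p3b, p4a, p4b⟩

set_option maxHeartbeats 1000000 in
theorem j_sizes_for_large_im (τ : ℂ) (hτ : τ ∈ Fdom) (him : 3 ≤ τ.im) :
    10 ^ 8 ≤ ‖klj τ‖ ∧
    0.98 * ‖klj τ‖ ^ 2 ≤ ‖klj (2 * τ)‖ ∧
    ‖klj (2 * τ)‖ ≤ 1.02 * ‖klj τ‖ ^ 2 ∧
    0.83 * Real.sqrt (‖klj τ‖) ≤ ‖klj (τ / 2)‖ ∧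
    ‖klj (τ / 2)‖ ≤ 1.17 * Real.sqrt (‖klj τ‖) ∧
    0.83 * Real.sqrt (‖klj τ‖) ≤ ‖klj ((τ + 1) / 2)‖ ∧
    ‖klj ((τ + 1) / 2)‖ ≤ 1.17 * Real.sqrt (‖klj τ‖) := by
  have hπ : 0 < Real.pi := Real.pi_pos
  set y : ℝ := τ.im with hydef
  have hy : 3 ≤ y := him
  set e : ℝ := Real.exp (-(Real.pi * y)) with hedef
  have hepos : 0 < e := Real.exp_pos _
  have heb : e * 11500 ≤ 1 := by
    have h1 : e ≤ Real.exp (-(3*Real.pi)) := Real.exp_le_exp.2 (by nlinarith)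
    have h2 : Real.exp (-(3*Real.pi)) * Real.exp (3*Real.pi) = 1 := by
      rw [← Real.exp_add]; simp
    nlinarith [exp_3pi, Real.exp_pos (3*Real.pi), Real.exp_pos (-(3*Real.pi))]
  have habs_τ : ‖Complex.exp (2 * Real.pi * Complex.I * τ)‖ = e^2 := by
    rw [abs_exp_eq, hedef, sq, ← Real.exp_add, ← hydef]
    congr 1; ring
  have him2 : (2*τ).im = 2*y := by simp [hydef]
  have habs_2τ : ‖Complex.exp (2 * Real.pi * Complex.I * (2*τ))‖ = e^4 := by
    rw [abs_exp_eq, him2, hedef, ← Real.exp_nat_mul]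
    congr 1; push_cast; ring
  have himh : (τ/2).im = y/2 := by
    rw [hydef]; simp [Complex.div_im]
  have himh' : ((τ+1)/2).im = y/2 := by
    rw [hydef]; simp [Complex.div_im]
  have habs_h : ‖Complex.exp (2 * Real.pi * Complex.I * (τ/2))‖ = e := by
    rw [abs_exp_eq, himh, hedef]
    congr 1; ring
  have habs_h' : ‖Complex.exp (2 * Real.pi * Complex.I * ((τ+1)/2))‖ = e := by
    rw [abs_exp_eq, himh', hedef]
    congr 1; ring
  obtain ⟨hJτl, hJτu⟩ := jq_bounds τ (by rw [← hydef]; linarith)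
  obtain ⟨hJ2l, hJ2u⟩ := jq_bounds (2*τ) (by rw [him2]; linarith)
  obtain ⟨hJhl, hJhu⟩ := jq_bounds (τ/2) (by rw [himh]; linarith)
  obtain ⟨hJh'l, hJh'u⟩ := jq_bounds ((τ+1)/2) (by rw [himh']; linarith)
  rw [habs_τ] at hJτl hJτu
  rw [habs_2τ] at hJ2l hJ2u
  rw [habs_h] at hJhl hJhu
  rw [habs_h'] at hJh'l hJh'u
  exact real_arith e (‖klj τ‖) (‖klj (2*τ)‖)
    (‖klj (τ/2)‖) (‖klj ((τ+1)/2)‖) hepos heb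
    hJτl hJτu hJ2l hJ2u hJhl hJhu hJh'l hJh'u
    (norm_nonneg _) (norm_nonneg _) (norm_nonneg _)
end

section
/- For every τ ∈ F with Im τ ≥ 3, |j(2τ) − (j(τ)² − 2·744·j(τ) − 2·196884 + 744² + 744)| ≤ 0.4. -/
open Complex Real Filter

noncomputable def Complex.abs : AbsoluteValue ℂ ℝ := NormedField.toAbsoluteValue ℂ

lemma Complex.norm_eq_abs (z : ℂ) : ‖z‖ = Complex.abs z := rfl

lemma Complex.abs_ofNat (n : ℕ) [n.AtLeastTwo] :
    Complex.abs (ofNat(n) : ℂ) = ofNat(n) := Complex.norm_ofNat n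

lemma Complex.abs_natCast (n : ℕ) : Complex.abs n = n := Complex.norm_natCast n

lemma Complex.abs_two : Complex.abs 2 = 2 := Complex.abs_ofNat 2

lemma Complex.abs_exp (z : ℂ) : Complex.abs (Complex.exp z) = Real.exp z.re :=
  Complex.norm_exp z

noncomputable def e4f (x : ℂ) : ℂ :=
  1 + 240 * ∑' n : ℕ, (∑ d ∈ (n + 1).divisors, (d : ℂ) ^ 3) * x ^ (n + 1)

noncomputable def e6f (x : ℂ) : ℂ :=
  1 - 504 * ∑' n : ℕ, (∑ d ∈ (n + 1).divisors, (d : ℂ) ^ 5) * x ^ (n + 1)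

noncomputable def jfn (x : ℂ) : ℂ := 1728 * e4f x ^ 3 / (e4f x ^ 3 - e6f x ^ 2)

lemma cabs_sub_le (a b : ℂ) : Complex.abs (a - b) ≤ Complex.abs a + Complex.abs b := by
  simpa [sub_eq_add_neg] using Complex.abs.add_le a (-b)

lemma cabs_add3 (a b c : ℂ) :
    Complex.abs (a + b + c) ≤ Complex.abs a + Complex.abs b + Complex.abs c := by
  calc Complex.abs (a + b + c) ≤ Complex.abs (a + b) + Complex.abs c := Complex.abs.add_le _ _
    _ ≤ Complex.abs a + Complex.abs b + Complex.abs c := by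
        have := Complex.abs.add_le a b; linarith

lemma cabs_add4 (a b c d : ℂ) :
    Complex.abs (a + b + c + d) ≤
      Complex.abs a + Complex.abs b + Complex.abs c + Complex.abs d := by
  calc Complex.abs (a + b + c + d) ≤ Complex.abs (a + b + c) + Complex.abs d :=
        Complex.abs.add_le _ _
    _ ≤ _ := by have := cabs_add3 a b c; linarith

lemma sig_abs_le (k n : ℕ) :
    Complex.abs (∑ d ∈ (n + 1).divisors, (d : ℂ) ^ k) ≤ ((n : ℝ) + 1) ^ (k + 1) := by
  have h1 : Complex.abs (∑ d ∈ (n + 1).divisors, (d : ℂ) ^ k)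
      ≤ ∑ d ∈ (n + 1).divisors, ((n : ℝ) + 1) ^ k := by
    refine (Complex.abs.sum_le _ _).trans (Finset.sum_le_sum fun d hd => ?_)
    rw [map_pow, Complex.abs_natCast]
    refine pow_le_pow_left₀ (Nat.cast_nonneg d) ?_ k
    have hd' : d ≤ n + 1 := Nat.divisor_le hd
    exact_mod_cast hd'
  have h3 : ((n + 1).divisors.card : ℝ) ≤ (n : ℝ) + 1 := by
    have hsub : (n + 1).divisors ⊆ Finset.Ico 1 (n + 2) := fun d hd =>
      Finset.mem_Ico.mpr ⟨Nat.pos_of_mem_divisors hd, Nat.lt_succ_of_le (Nat.divisor_le hd)⟩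
    have := Finset.card_le_card hsub
    rw [Nat.card_Ico] at this
    exact_mod_cast this
  calc Complex.abs (∑ d ∈ (n + 1).divisors, (d : ℂ) ^ k)
      ≤ ∑ d ∈ (n + 1).divisors, ((n : ℝ) + 1) ^ k := h1
    _ = ((n + 1).divisors.card : ℝ) * ((n : ℝ) + 1) ^ k := by
        rw [Finset.sum_const, nsmul_eq_mul]
    _ ≤ ((n : ℝ) + 1) * ((n : ℝ) + 1) ^ k := by
        exact mul_le_mul_of_nonneg_right h3 (by positivity)
    _ = ((n : ℝ) + 1) ^ (k + 1) := by rw [pow_succ]; ring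

lemma aux_pow (K : ℕ) (hk : ((5 : ℝ) / 4) ^ K ≤ 5) (n : ℕ) :
    ((n : ℝ) + 4) ^ K ≤ 4 ^ K * 5 ^ n := by
  induction n with
  | zero => norm_num
  | succ n ih =>
    have hn : (0 : ℝ) ≤ (n : ℝ) := Nat.cast_nonneg n
    have h1 : ((n : ℝ) + 1 + 4) ≤ 5 / 4 * ((n : ℝ) + 4) := by linarith
    have hc : (((n + 1 : ℕ) : ℝ) + 4) = ((n : ℝ) + 1 + 4) := by push_cast; ring
    rw [hc]
    calc ((n : ℝ) + 1 + 4) ^ K ≤ (5 / 4 * ((n : ℝ) + 4)) ^ K :=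
          pow_le_pow_left₀ (by linarith) h1 K
      _ = (5 / 4 : ℝ) ^ K * ((n : ℝ) + 4) ^ K := mul_pow _ _ _
      _ ≤ 5 * (4 ^ K * 5 ^ n) := by
          refine mul_le_mul hk ih (by positivity) (by norm_num)
      _ = 4 ^ K * 5 ^ (n + 1) := by ring

lemma tail_bound (K : ℕ) (hk : ((5 : ℝ) / 4) ^ K ≤ 5) (hK : (4 : ℝ) ^ K ≤ 4096)
    (f : ℕ → ℂ) (hf : ∀ n, Complex.abs (f n) ≤ ((n : ℝ) + 1) ^ K)
    (x : ℂ) (hx : Complex.abs x ≤ 7e-9) :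
    Complex.abs ((∑' n : ℕ, f n * x ^ (n + 1)) - (f 0 * x + f 1 * x ^ 2 + f 2 * x ^ 3))
      ≤ ((4 : ℝ) ^ K + 1) * Complex.abs x ^ 4 := by
  set r := Complex.abs x with hr_def
  have hr0 : 0 ≤ r := Complex.abs.nonneg x
  have hr1 : r < 1 := lt_of_le_of_lt hx (by norm_num)
  have hgeo : Summable (fun n : ℕ => ((n : ℝ)) ^ K * r ^ n) :=
    summable_pow_mul_geometric_of_norm_lt_one K
      (by rwa [Real.norm_eq_abs, _root_.abs_of_nonneg hr0])
  have hdom : Summable (fun n : ℕ => ((n : ℝ) + 1) ^ K * r ^ (n + 1)) := by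
    have h := (summable_nat_add_iff (f := fun n : ℕ => ((n : ℝ)) ^ K * r ^ n) 1).2 hgeo
    refine h.congr fun n => ?_
    push_cast
    ring
  have hsf : Summable (fun n : ℕ => f n * x ^ (n + 1)) := by
    refine Summable.of_norm_bounded hdom fun n => ?_
    rw [norm_mul, norm_pow, Complex.norm_eq_abs, Complex.norm_eq_abs]
    exact mul_le_mul (hf n) le_rfl (by positivity) (by positivity)
  have hdec := Summable.sum_add_tsum_nat_add (f := fun n : ℕ => f n * x ^ (n + 1)) 3 hsf
  have hsum3 : ∑ i ∈ Finset.range 3, f i * x ^ (i + 1)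
      = f 0 * x + f 1 * x ^ 2 + f 2 * x ^ 3 := by
    simp [Finset.sum_range_succ]
  rw [← hdec, hsum3, add_sub_cancel_left]
  have hsf3 : Summable (fun n : ℕ => f (n + 3) * x ^ (n + 3 + 1)) :=
    (summable_nat_add_iff (f := fun n : ℕ => f n * x ^ (n + 1)) 3).2 hsf
  have htail_term : ∀ n : ℕ, ‖f (n + 3) * x ^ (n + 3 + 1)‖ ≤ 4 ^ K * r ^ 4 * (5 * r) ^ n := by
    intro n
    rw [norm_mul, norm_pow, Complex.norm_eq_abs, Complex.norm_eq_abs, ← hr_def]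
    have h1 : Complex.abs (f (n + 3)) ≤ ((n : ℝ) + 4) ^ K := by
      have h := hf (n + 3)
      have : (((n + 3 : ℕ)) : ℝ) + 1 = (n : ℝ) + 4 := by push_cast; ring
      rwa [this] at h
    have h2 : ((n : ℝ) + 4) ^ K ≤ 4 ^ K * 5 ^ n := aux_pow K hk n
    calc Complex.abs (f (n + 3)) * r ^ (n + 3 + 1)
        ≤ (4 ^ K * 5 ^ n) * r ^ (n + 3 + 1) := by
          exact mul_le_mul_of_nonneg_right (h1.trans h2) (by positivity)
      _ = 4 ^ K * r ^ 4 * (5 * r) ^ n := by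
          rw [mul_pow]
          ring
  have h5r : 5 * r < 1 := by nlinarith
  have hgs : Summable (fun n : ℕ => (4 : ℝ) ^ K * r ^ 4 * (5 * r) ^ n) :=
    (summable_geometric_of_lt_one (by positivity) h5r).mul_left _
  calc Complex.abs (∑' n : ℕ, f (n + 3) * x ^ (n + 3 + 1))
      = ‖∑' n : ℕ, f (n + 3) * x ^ (n + 3 + 1)‖ := (Complex.norm_eq_abs _).symm
    _ ≤ ∑' n : ℕ, ‖f (n + 3) * x ^ (n + 3 + 1)‖ := norm_tsum_le_tsum_norm hsf3.norm
    _ ≤ ∑' n : ℕ, (4 : ℝ) ^ K * r ^ 4 * (5 * r) ^ n :=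
        Summable.tsum_le_tsum htail_term hsf3.norm hgs
    _ = (4 : ℝ) ^ K * r ^ 4 * (1 - 5 * r)⁻¹ := by
        rw [tsum_mul_left, tsum_geometric_of_lt_one (by positivity) h5r]
    _ ≤ ((4 : ℝ) ^ K + 1) * r ^ 4 := by
        have hpos : (0 : ℝ) < 1 - 5 * r := by linarith
        rw [mul_inv_le_iff₀ hpos]
        have h4K : (0 : ℝ) ≤ 4 ^ K := by positivity
        have hr4 : (0 : ℝ) ≤ r ^ 4 := by positivity
        have hc : r * (4 ^ K + 1) ≤ 7e-9 * 4097 := by nlinarith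
        nlinarith [mul_nonneg hr4 (mul_nonneg (by linarith : (0:ℝ) ≤ 5 * r) h4K)]

set_option maxHeartbeats 2000000

lemma cabs_add5 (a b c d e : ℂ) :
    Complex.abs (a + b + c + d + e) ≤ Complex.abs a + Complex.abs b + Complex.abs c
      + Complex.abs d + Complex.abs e := by
  calc Complex.abs (a + b + c + d + e) ≤ Complex.abs (a + b + c + d) + Complex.abs e :=
        Complex.abs.add_le _ _
    _ ≤ _ := by have := cabs_add4 a b c d; linarith

lemma cabs_add6 (a b c d e f : ℂ) :
    Complex.abs (a + b + c + d + e + f) ≤ Complex.abs a + Complex.abs b + Complex.abs c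
      + Complex.abs d + Complex.abs e + Complex.abs f := by
  calc Complex.abs (a + b + c + d + e + f) ≤ Complex.abs (a + b + c + d + e) + Complex.abs f :=
        Complex.abs.add_le _ _
    _ ≤ _ := by have := cabs_add5 a b c d e; linarith

lemma cabs_sub3 (a b c : ℂ) :
    Complex.abs (a - b - c) ≤ Complex.abs a + Complex.abs b + Complex.abs c := by
  calc Complex.abs (a - b - c) ≤ Complex.abs (a - b) + Complex.abs c := cabs_sub_le _ _
    _ ≤ _ := by have := cabs_sub_le a b; linarith

lemma cabs_add_sub (a b c : ℂ) :
    Complex.abs (a + b - c) ≤ Complex.abs a + Complex.abs b + Complex.abs c := by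
  calc Complex.abs (a + b - c) ≤ Complex.abs (a + b) + Complex.abs c := cabs_sub_le _ _
    _ ≤ _ := by have := Complex.abs.add_le a b; linarith

lemma sdiv1 : (1:ℕ).divisors = {1} := by decide
lemma sdiv2 : (2:ℕ).divisors = {1, 2} := by decide
lemma sdiv3 : (3:ℕ).divisors = {1, 3} := by decide

lemma e4_err (x : ℂ) (hx : Complex.abs x ≤ 7e-9) :
    Complex.abs (e4f x - (1 + 240*x + 2160*x^2 + 6720*x^3)) ≤ 61680 * Complex.abs x ^ 4 := by
  have ht := tail_bound 4 (by norm_num) (by norm_num)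
      (fun n => ∑ d ∈ (n+1).divisors, (d:ℂ)^3) (fun n => sig_abs_le 3 n) x hx
  have hval0 : (∑ d ∈ ((0:ℕ)+1).divisors, (d:ℂ)^3) = 1 := by norm_num [sdiv1]
  have hval1 : (∑ d ∈ ((1:ℕ)+1).divisors, (d:ℂ)^3) = 9 := by
    norm_num [sdiv2, Finset.sum_pair]
  have hval2 : (∑ d ∈ ((2:ℕ)+1).divisors, (d:ℂ)^3) = 28 := by
    norm_num [sdiv3, Finset.sum_pair]
  rw [hval0, hval1, hval2] at ht
  have hid : e4f x - (1 + 240*x + 2160*x^2 + 6720*x^3)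
      = 240 * ((∑' n : ℕ, (∑ d ∈ (n+1).divisors, (d:ℂ)^3) * x^(n+1))
          - (1*x + 9*x^2 + 28*x^3)) := by
    unfold e4f; ring
  rw [hid, map_mul]
  have h240 : Complex.abs 240 = 240 := Complex.abs_ofNat 240
  rw [h240]
  have h4 : (0:ℝ) ≤ Complex.abs x ^ 4 := by positivity
  nlinarith [ht]

lemma e6_err (x : ℂ) (hx : Complex.abs x ≤ 7e-9) :
    Complex.abs (e6f x - (1 - 504*x - 16632*x^2 - 122976*x^3))
      ≤ 2064888 * Complex.abs x ^ 4 := by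
  have ht := tail_bound 6 (by norm_num) (by norm_num)
      (fun n => ∑ d ∈ (n+1).divisors, (d:ℂ)^5) (fun n => sig_abs_le 5 n) x hx
  have hval0 : (∑ d ∈ ((0:ℕ)+1).divisors, (d:ℂ)^5) = 1 := by norm_num [sdiv1]
  have hval1 : (∑ d ∈ ((1:ℕ)+1).divisors, (d:ℂ)^5) = 33 := by
    norm_num [sdiv2, Finset.sum_pair]
  have hval2 : (∑ d ∈ ((2:ℕ)+1).divisors, (d:ℂ)^5) = 244 := by
    norm_num [sdiv3, Finset.sum_pair]
  rw [hval0, hval1, hval2] at ht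
  have hid : e6f x - (1 - 504*x - 16632*x^2 - 122976*x^3)
      = (-504) * ((∑' n : ℕ, (∑ d ∈ (n+1).divisors, (d:ℂ)^5) * x^(n+1))
          - (1*x + 33*x^2 + 244*x^3)) := by
    unfold e6f; ring
  rw [hid, map_mul]
  have h504 : Complex.abs (-504) = 504 := by
    rw [map_neg_eq_map]; exact Complex.abs_ofNat 504
  rw [h504]
  have h4 : (0:ℝ) ≤ Complex.abs x ^ 4 := by positivity
  nlinarith [ht]

lemma h43L (x : ℂ) (hx : Complex.abs x ≤ 7e-9) :
    Complex.abs (e4f x ^ 3 - (1 + 720*x + 179280*x^2 + 16954560*x^3))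
      ≤ 397200000 * Complex.abs x ^ 4 := by
  have hXn : 0 ≤ Complex.abs x := Complex.abs.nonneg x
  have hX2 : Complex.abs x ^ 2 ≤ 4.9e-17 := by nlinarith
  have hX3 : Complex.abs x ^ 3 ≤ 3.43e-25 := by nlinarith
  have hX4 : Complex.abs x ^ 4 ≤ 2.401e-33 := by nlinarith
  have hX5 : Complex.abs x ^ 5 ≤ 1.7e-41 := by nlinarith
  have hX4pos : (0:ℝ) ≤ Complex.abs x ^ 4 := by positivity
  have hu := e4_err x hx
  have hun : 0 ≤ Complex.abs (e4f x - (1 + 240*x + 2160*x^2 + 6720*x^3)) :=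
    Complex.abs.nonneg _
  have hu_small : Complex.abs (e4f x - (1 + 240*x + 2160*x^2 + 6720*x^3)) ≤ 1.5e-28 := by
    linarith
  have hap : Complex.abs (1 + 240*x + 2160*x^2 + 6720*x^3) ≤ 1.001 := by
    refine (cabs_add4 _ _ _ _).trans ?_
    simp only [map_one, map_mul, map_pow, Complex.abs_ofNat]
    linarith
  have hapn : 0 ≤ Complex.abs (1 + 240*x + 2160*x^2 + 6720*x^3) := Complex.abs.nonneg _
  have hid : e4f x ^ 3 - (1 + 720*x + 179280*x^2 + 16954560*x^3)
      = x^4 * (396921600 + 4607539200*x + 31115059200*x^2 + 126572544000*x^3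
          + 292626432000*x^4 + 303464448000*x^5)
        + (3*(1 + 240*x + 2160*x^2 + 6720*x^3)^2
            * (e4f x - (1 + 240*x + 2160*x^2 + 6720*x^3))
          + 3*(1 + 240*x + 2160*x^2 + 6720*x^3)
            * (e4f x - (1 + 240*x + 2160*x^2 + 6720*x^3))^2
          + (e4f x - (1 + 240*x + 2160*x^2 + 6720*x^3))^3) := by
    ring
  rw [hid]
  refine (Complex.abs.add_le _ _).trans ?_
  have hpoly : Complex.abs (396921600 + 4607539200*x + 31115059200*x^2 + 126572544000*x^3
      + 292626432000*x^4 + 303464448000*x^5) ≤ 396930000 := by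
    refine (cabs_add6 _ _ _ _ _ _).trans ?_
    simp only [map_mul, map_pow, Complex.abs_ofNat]
    linarith
  have hA : Complex.abs (x^4 * (396921600 + 4607539200*x + 31115059200*x^2
      + 126572544000*x^3 + 292626432000*x^4 + 303464448000*x^5))
      ≤ 396930000 * Complex.abs x ^ 4 := by
    rw [map_mul, map_pow, mul_comm]
    exact mul_le_mul_of_nonneg_right hpoly hX4pos
  have hap2 : Complex.abs (1 + 240*x + 2160*x^2 + 6720*x^3) ^ 2 ≤ 1.003 := by
    nlinarith
  have hm1 := mul_le_mul hap2 hu (by positivity) (by norm_num : (0:ℝ) ≤ 1.003)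
  have hB1 : 3 * Complex.abs (1 + 240*x + 2160*x^2 + 6720*x^3) ^ 2
      * Complex.abs (e4f x - (1 + 240*x + 2160*x^2 + 6720*x^3))
      ≤ 190000 * Complex.abs x ^ 4 := by nlinarith
  have hm2 := mul_le_mul hu hu_small hun (by positivity : (0:ℝ) ≤ 61680 * Complex.abs x ^ 4)
  have hau2 : Complex.abs (e4f x - (1 + 240*x + 2160*x^2 + 6720*x^3)) ^ 2
      ≤ 9.3e-24 * Complex.abs x ^ 4 := by nlinarith
  have hm3 := mul_le_mul hap hau2 (by positivity) (by norm_num : (0:ℝ) ≤ 1.001)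
  have hB2 : 3 * Complex.abs (1 + 240*x + 2160*x^2 + 6720*x^3)
      * Complex.abs (e4f x - (1 + 240*x + 2160*x^2 + 6720*x^3)) ^ 2
      ≤ 1 * Complex.abs x ^ 4 := by nlinarith
  have hm4 := mul_le_mul hau2 hu_small hun
    (by positivity : (0:ℝ) ≤ 9.3e-24 * Complex.abs x ^ 4)
  have hB3 : Complex.abs (e4f x - (1 + 240*x + 2160*x^2 + 6720*x^3)) ^ 3
      ≤ 1 * Complex.abs x ^ 4 := by nlinarith
  have hB : Complex.abs (3*(1 + 240*x + 2160*x^2 + 6720*x^3)^2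
        * (e4f x - (1 + 240*x + 2160*x^2 + 6720*x^3))
      + 3*(1 + 240*x + 2160*x^2 + 6720*x^3)
        * (e4f x - (1 + 240*x + 2160*x^2 + 6720*x^3))^2
      + (e4f x - (1 + 240*x + 2160*x^2 + 6720*x^3))^3)
      ≤ 270000 * Complex.abs x ^ 4 := by
    refine (cabs_add3 _ _ _).trans ?_
    simp only [map_mul, map_pow, Complex.abs_ofNat]
    linarith
  linarith

lemma h62L (x : ℂ) (hx : Complex.abs x ≤ 7e-9) :
    Complex.abs (e6f x ^ 2 - (1 - 1008*x + 220752*x^2 + 16519104*x^3))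
      ≤ 404800000 * Complex.abs x ^ 4 := by
  have hXn : 0 ≤ Complex.abs x := Complex.abs.nonneg x
  have hX2 : Complex.abs x ^ 2 ≤ 4.9e-17 := by nlinarith
  have hX3 : Complex.abs x ^ 3 ≤ 3.43e-25 := by nlinarith
  have hX4 : Complex.abs x ^ 4 ≤ 2.401e-33 := by nlinarith
  have hX4pos : (0:ℝ) ≤ Complex.abs x ^ 4 := by positivity
  have hv := e6_err x hx
  have hvn : 0 ≤ Complex.abs (e6f x - (1 - 504*x - 16632*x^2 - 122976*x^3)) :=
    Complex.abs.nonneg _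
  have hv_small : Complex.abs (e6f x - (1 - 504*x - 16632*x^2 - 122976*x^3)) ≤ 5e-27 := by
    linarith
  have hap6 : Complex.abs (1 - 504*x - 16632*x^2 - 122976*x^3) ≤ 1.001 := by
    refine (cabs_sub3 _ _ _).trans ?_
    have h1 : Complex.abs (1 - 504*x) ≤ 1 + 504 * Complex.abs x := by
      refine (cabs_sub_le _ _).trans ?_
      simp only [map_one, map_mul, Complex.abs_ofNat]
      exact le_rfl
    have h2 : Complex.abs (16632*x^2) = 16632 * Complex.abs x ^ 2 := by
      simp only [map_mul, map_pow, Complex.abs_ofNat]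
    have h3 : Complex.abs (122976*x^3) = 122976 * Complex.abs x ^ 3 := by
      simp only [map_mul, map_pow, Complex.abs_ofNat]
    rw [h2, h3]
    linarith
  have hid : e6f x ^ 2 - (1 - 1008*x + 220752*x^2 + 16519104*x^3)
      = x^4 * (400583232 + 4090673664*x + 15123096576*x^2)
        + (2*(1 - 504*x - 16632*x^2 - 122976*x^3)
            * (e6f x - (1 - 504*x - 16632*x^2 - 122976*x^3))
          + (e6f x - (1 - 504*x - 16632*x^2 - 122976*x^3))^2) := by
    ring
  rw [hid]
  refine (Complex.abs.add_le _ _).trans ?_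
  have hpoly : Complex.abs (400583232 + 4090673664*x + 15123096576*x^2) ≤ 400590000 := by
    refine (cabs_add3 _ _ _).trans ?_
    simp only [map_mul, map_pow, Complex.abs_ofNat]
    linarith
  have hA : Complex.abs (x^4 * (400583232 + 4090673664*x + 15123096576*x^2))
      ≤ 400590000 * Complex.abs x ^ 4 := by
    rw [map_mul, map_pow, mul_comm]
    exact mul_le_mul_of_nonneg_right hpoly hX4pos
  have hm1 := mul_le_mul hap6 hv (Complex.abs.nonneg _) (by norm_num : (0:ℝ) ≤ 1.001)
  have hB1 : 2 * Complex.abs (1 - 504*x - 16632*x^2 - 122976*x^3)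
      * Complex.abs (e6f x - (1 - 504*x - 16632*x^2 - 122976*x^3))
      ≤ 4135000 * Complex.abs x ^ 4 := by nlinarith
  have hm2 := mul_le_mul hv hv_small hvn (by positivity : (0:ℝ) ≤ 2064888 * Complex.abs x ^ 4)
  have hB2 : Complex.abs (e6f x - (1 - 504*x - 16632*x^2 - 122976*x^3)) ^ 2
      ≤ 1 * Complex.abs x ^ 4 := by nlinarith
  have hB : Complex.abs (2*(1 - 504*x - 16632*x^2 - 122976*x^3)
        * (e6f x - (1 - 504*x - 16632*x^2 - 122976*x^3))
      + (e6f x - (1 - 504*x - 16632*x^2 - 122976*x^3))^2)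
      ≤ 4200000 * Complex.abs x ^ 4 := by
    refine (Complex.abs.add_le _ _).trans ?_
    simp only [map_mul, map_pow, Complex.abs_ofNat]
    linarith
  linarith

lemma hWL (x : ℂ) (hx : Complex.abs x ≤ 7e-9) :
    Complex.abs ((e4f x ^ 3 - e6f x ^ 2) - (1728*x - 41472*x^2 + 435456*x^3))
      ≤ 802000000 * Complex.abs x ^ 4 := by
  have h43 := h43L x hx
  have h62 := h62L x hx
  have hid : (e4f x ^ 3 - e6f x ^ 2) - (1728*x - 41472*x^2 + 435456*x^3)
      = (e4f x ^ 3 - (1 + 720*x + 179280*x^2 + 16954560*x^3))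
        - (e6f x ^ 2 - (1 - 1008*x + 220752*x^2 + 16519104*x^3)) := by ring
  rw [hid]
  exact (cabs_sub_le _ _).trans (by linarith)

lemma hWlowL (x : ℂ) (hx : Complex.abs x ≤ 7e-9) :
    1727 * Complex.abs x ≤ Complex.abs (e4f x ^ 3 - e6f x ^ 2) := by
  have hXn : 0 ≤ Complex.abs x := Complex.abs.nonneg x
  have hX2X : Complex.abs x ^ 2 ≤ 7e-9 * Complex.abs x := by nlinarith
  have hX3X : Complex.abs x ^ 3 ≤ 4.9e-17 * Complex.abs x := by nlinarith
  have hX4X : Complex.abs x ^ 4 ≤ 3.43e-25 * Complex.abs x := by nlinarith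
  have hW := hWL x hx
  have hsub : Complex.abs ((e4f x ^ 3 - e6f x ^ 2) - 1728*x) ≤ Complex.abs x := by
    have hid : (e4f x ^ 3 - e6f x ^ 2) - 1728*x
        = ((e4f x ^ 3 - e6f x ^ 2) - (1728*x - 41472*x^2 + 435456*x^3))
          + (435456*x^3 - 41472*x^2) := by ring
    rw [hid]
    refine (Complex.abs.add_le _ _).trans ?_
    have h2 : Complex.abs (435456*x^3 - 41472*x^2)
        ≤ 435456 * Complex.abs x ^ 3 + 41472 * Complex.abs x ^ 2 := by
      refine (cabs_sub_le _ _).trans ?_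
      simp only [map_mul, map_pow, Complex.abs_ofNat]
      exact le_rfl
    linarith
  have he : (e4f x ^ 3 - e6f x ^ 2) - ((e4f x ^ 3 - e6f x ^ 2) - 1728*x) = 1728*x := by
    ring
  have h1728 : Complex.abs (1728*x) = 1728 * Complex.abs x := by
    simp only [map_mul, Complex.abs_ofNat]
  have htr : Complex.abs (1728*x) ≤ Complex.abs (e4f x ^ 3 - e6f x ^ 2)
      + Complex.abs ((e4f x ^ 3 - e6f x ^ 2) - 1728*x) := by
    calc Complex.abs (1728*x)
        = Complex.abs ((e4f x ^ 3 - e6f x ^ 2) - ((e4f x ^ 3 - e6f x ^ 2) - 1728*x)) := by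
          rw [he]
      _ ≤ _ := cabs_sub_le _ _
  rw [h1728] at htr
  linarith

lemma hML (x : ℂ) (hx : Complex.abs x ≤ 7e-9) :
    Complex.abs (1728*x*e4f x ^ 3
        - (1 + 744*x + 196884*x^2 + 21493760*x^3) * (e4f x ^ 3 - e6f x ^ 2))
      ≤ 806000000 * Complex.abs x ^ 4 := by
  have hXn : 0 ≤ Complex.abs x := Complex.abs.nonneg x
  have hX2 : Complex.abs x ^ 2 ≤ 4.9e-17 := by nlinarith
  have hX3 : Complex.abs x ^ 3 ≤ 3.43e-25 := by nlinarith
  have hX4pos : (0:ℝ) ≤ Complex.abs x ^ 4 := by positivity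
  have h43 := h43L x hx
  have hW := hWL x hx
  have hid : 1728*x*e4f x ^ 3
      - (1 + 744*x + 196884*x^2 + 21493760*x^3) * (e4f x ^ 3 - e6f x ^ 2)
      = x^4 * (805654895616*x - 2543616 - 9359586754560*x^2)
        + 1728*(x*(e4f x ^ 3 - (1 + 720*x + 179280*x^2 + 16954560*x^3)))
        - (1 + 744*x + 196884*x^2 + 21493760*x^3)
          * ((e4f x ^ 3 - e6f x ^ 2) - (1728*x - 41472*x^2 + 435456*x^3)) := by
    ring
  rw [hid]
  refine (cabs_add_sub _ _ _).trans ?_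
  have hpoly : Complex.abs (805654895616*x - 2543616 - 9359586754560*x^2) ≤ 2550000 := by
    refine (cabs_sub3 _ _ _).trans ?_
    simp only [map_mul, map_pow, Complex.abs_ofNat]
    linarith
  have hA : Complex.abs (x^4 * (805654895616*x - 2543616 - 9359586754560*x^2))
      ≤ 2550000 * Complex.abs x ^ 4 := by
    rw [map_mul, map_pow, mul_comm]
    exact mul_le_mul_of_nonneg_right hpoly hX4pos
  have hm1 : Complex.abs x * Complex.abs (e4f x ^ 3 - (1 + 720*x + 179280*x^2 + 16954560*x^3))
      ≤ Complex.abs x * (397200000 * Complex.abs x ^ 4) :=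
    mul_le_mul_of_nonneg_left h43 hXn
  have hX5X4 : Complex.abs x ^ 5 ≤ 7e-9 * Complex.abs x ^ 4 := by
    nlinarith [mul_le_mul_of_nonneg_right hx hX4pos]
  have hB : Complex.abs (1728*(x*(e4f x ^ 3 - (1 + 720*x + 179280*x^2 + 16954560*x^3))))
      ≤ 4810 * Complex.abs x ^ 4 := by
    rw [map_mul, map_mul, Complex.abs_ofNat]
    nlinarith [hm1]
  have hBig : Complex.abs (1 + 744*x + 196884*x^2 + 21493760*x^3) ≤ 1.001 := by
    refine (cabs_add4 _ _ _ _).trans ?_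
    simp only [map_one, map_mul, map_pow, Complex.abs_ofNat]
    linarith
  have hm2 := mul_le_mul hBig hW (Complex.abs.nonneg _) (by norm_num : (0:ℝ) ≤ 1.001)
  have hC : Complex.abs ((1 + 744*x + 196884*x^2 + 21493760*x^3)
        * ((e4f x ^ 3 - e6f x ^ 2) - (1728*x - 41472*x^2 + 435456*x^3)))
      ≤ 802900000 * Complex.abs x ^ 4 := by
    rw [map_mul]
    nlinarith
  linarith

lemma jf_approx (x : ℂ) (hx0 : x ≠ 0) (hx : Complex.abs x ≤ 7e-9) :
    Complex.abs (jfn x - (x⁻¹ + 744 + 196884*x + 21493760*x^2))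
      ≤ 500000 * Complex.abs x ^ 2 := by
  have hX0 : 0 < Complex.abs x := Complex.abs.pos hx0
  have hXn : 0 ≤ Complex.abs x := hX0.le
  have hX4pos : (0:ℝ) ≤ Complex.abs x ^ 4 := by positivity
  have hWlow := hWlowL x hx
  have hM := hML x hx
  have hWpos : 0 < Complex.abs (e4f x ^ 3 - e6f x ^ 2) := by nlinarith
  have hWne : e4f x ^ 3 - e6f x ^ 2 ≠ 0 := by
    intro h
    rw [h, map_zero] at hWpos
    exact lt_irrefl 0 hWpos
  have hkey : jfn x - (x⁻¹ + 744 + 196884*x + 21493760*x^2)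
      = (1728*x*e4f x ^ 3
          - (1 + 744*x + 196884*x^2 + 21493760*x^3) * (e4f x ^ 3 - e6f x ^ 2))
        / (x * (e4f x ^ 3 - e6f x ^ 2)) := by
    unfold jfn
    field_simp
  rw [hkey, map_div₀, map_mul]
  have hden : 0 < Complex.abs x * Complex.abs (e4f x ^ 3 - e6f x ^ 2) := by positivity
  rw [div_le_iff₀ hden]
  calc Complex.abs (1728*x*e4f x ^ 3
        - (1 + 744*x + 196884*x^2 + 21493760*x^3) * (e4f x ^ 3 - e6f x ^ 2))
      ≤ 806000000 * Complex.abs x ^ 4 := hM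
    _ ≤ 500000 * Complex.abs x ^ 2 * (Complex.abs x * (1727 * Complex.abs x)) := by
        nlinarith [hX4pos]
    _ ≤ 500000 * Complex.abs x ^ 2 * (Complex.abs x * Complex.abs (e4f x ^ 3 - e6f x ^ 2)) := by
        refine mul_le_mul_of_nonneg_left ?_ (by positivity)
        exact mul_le_mul_of_nonneg_left hWlow hXn

set_option maxHeartbeats 2000000

lemma exp_6pi : (147000000:ℝ) ≤ Real.exp (6 * Real.pi) := by
  have hpi : (3.141592:ℝ) ≤ π := Real.pi_gt_d6.le
  have h6 : (18.849552:ℝ) ≤ 6 * π := by nlinarith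
  have he1 : (2.7182818283:ℝ) ≤ Real.exp 1 := Real.exp_one_gt_d9.le
  have he2 : (1.106194:ℝ) ≤ Real.exp 0.106194 := by
    have := Real.add_one_le_exp (0.106194:ℝ); linarith
  have h18 : Real.exp 1 ^ (18:ℕ) = Real.exp 18 := by
    rw [← Real.exp_nat_mul]; norm_num
  have h8 : Real.exp 0.106194 ^ (8:ℕ) = Real.exp 0.849552 := by
    rw [← Real.exp_nat_mul]; norm_num
  calc (147000000:ℝ) ≤ (2.7182818283:ℝ) ^ (18:ℕ) * (1.106194:ℝ) ^ (8:ℕ) := by norm_num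
    _ ≤ Real.exp 1 ^ (18:ℕ) * Real.exp 0.106194 ^ (8:ℕ) := by
        refine mul_le_mul (pow_le_pow_left₀ (by norm_num) he1 18)
          (pow_le_pow_left₀ (by norm_num) he2 8) (by positivity) (by positivity)
    _ = Real.exp 18 * Real.exp 0.849552 := by rw [h18, h8]
    _ = Real.exp 18.849552 := by rw [← Real.exp_add]; norm_num
    _ ≤ Real.exp (6 * π) := Real.exp_le_exp.2 h6

lemma qabs_le (τ : ℂ) (him : 3 ≤ τ.im) :
    Complex.abs (Complex.exp (2 * (Real.pi:ℂ) * Complex.I * τ)) ≤ 7e-9 := by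
  rw [Complex.abs_exp]
  have hre : (2 * (Real.pi:ℂ) * Complex.I * τ).re = -(2 * Real.pi * τ.im) := by
    simp [Complex.mul_re, Complex.mul_im]
  rw [hre]
  have hpi : 0 < Real.pi := Real.pi_pos
  have h1 : -(2 * Real.pi * τ.im) ≤ -(6 * Real.pi) := by nlinarith
  calc Real.exp (-(2 * Real.pi * τ.im)) ≤ Real.exp (-(6 * Real.pi)) := Real.exp_le_exp.2 h1
    _ ≤ 7e-9 := by
      rw [Real.exp_neg]
      calc (Real.exp (6 * Real.pi))⁻¹ ≤ (147000000:ℝ)⁻¹ :=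
            inv_anti₀ (by norm_num) exp_6pi
        _ ≤ 7e-9 := by norm_num

lemma final_est (q : ℂ) (hq0 : q ≠ 0) (hq : Complex.abs q ≤ 7e-9) :
    Complex.abs (jfn (q^2) - (jfn q ^ 2 - 2 * 744 * jfn q - 2 * 196884 + 744 ^ 2 + 744))
      ≤ 0.4 := by
  have hX0 : 0 < Complex.abs q := Complex.abs.pos hq0
  have hXn : 0 ≤ Complex.abs q := hX0.le
  have hX2 : Complex.abs q ^ 2 ≤ 4.9e-17 := by nlinarith
  have hX3 : Complex.abs q ^ 3 ≤ 3.43e-25 := by nlinarith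
  have hX4 : Complex.abs q ^ 4 ≤ 2.401e-33 := by nlinarith
  have h1 := jf_approx q hq0 hq
  have hq2abs : Complex.abs (q^2) ≤ 7e-9 := by rw [map_pow]; nlinarith
  have h2 := jf_approx (q^2) (pow_ne_zero 2 hq0) hq2abs
  rw [map_pow] at h2
  have halg : jfn (q^2) - (jfn q ^ 2 - 2 * 744 * jfn q - 2 * 196884 + 744 ^ 2 + 744)
      = (jfn (q^2) - ((q^2)⁻¹ + 744 + 196884*(q^2) + 21493760*(q^2)^2))
        - (2*(q⁻¹ + 744 + 196884*q + 21493760*q^2) - 1488)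
          * (jfn q - (q⁻¹ + 744 + 196884*q + 21493760*q^2))
        - (jfn q - (q⁻¹ + 744 + 196884*q + 21493760*q^2))^2
        - (42987520*q + 38763112572*q^2 + 8463554887680*q^3 + 461981697443840*q^4) := by
    field_simp
    ring
  rw [halg]
  have htri : Complex.abs ((jfn (q^2) - ((q^2)⁻¹ + 744 + 196884*(q^2) + 21493760*(q^2)^2))
        - (2*(q⁻¹ + 744 + 196884*q + 21493760*q^2) - 1488)
          * (jfn q - (q⁻¹ + 744 + 196884*q + 21493760*q^2))
        - (jfn q - (q⁻¹ + 744 + 196884*q + 21493760*q^2))^2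
        - (42987520*q + 38763112572*q^2 + 8463554887680*q^3 + 461981697443840*q^4))
      ≤ Complex.abs (jfn (q^2) - ((q^2)⁻¹ + 744 + 196884*(q^2) + 21493760*(q^2)^2))
        + Complex.abs ((2*(q⁻¹ + 744 + 196884*q + 21493760*q^2) - 1488)
            * (jfn q - (q⁻¹ + 744 + 196884*q + 21493760*q^2)))
        + Complex.abs ((jfn q - (q⁻¹ + 744 + 196884*q + 21493760*q^2))^2)
        + Complex.abs (42987520*q + 38763112572*q^2 + 8463554887680*q^3
            + 461981697443840*q^4) := by
    calc Complex.abs _ ≤ Complex.abs ((jfn (q^2) - ((q^2)⁻¹ + 744 + 196884*(q^2) + 21493760*(q^2)^2))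
          - (2*(q⁻¹ + 744 + 196884*q + 21493760*q^2) - 1488)
            * (jfn q - (q⁻¹ + 744 + 196884*q + 21493760*q^2))
          - (jfn q - (q⁻¹ + 744 + 196884*q + 21493760*q^2))^2)
          + Complex.abs (42987520*q + 38763112572*q^2 + 8463554887680*q^3
            + 461981697443840*q^4) := cabs_sub_le _ _
      _ ≤ _ := by have := cabs_sub3 (jfn (q^2) - ((q^2)⁻¹ + 744 + 196884*(q^2) + 21493760*(q^2)^2))
                    ((2*(q⁻¹ + 744 + 196884*q + 21493760*q^2) - 1488)
                      * (jfn q - (q⁻¹ + 744 + 196884*q + 21493760*q^2)))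
                    ((jfn q - (q⁻¹ + 744 + 196884*q + 21493760*q^2))^2)
                  linarith
  refine htri.trans ?_
  -- term 1
  have ht1 : Complex.abs (jfn (q^2) - ((q^2)⁻¹ + 744 + 196884*(q^2) + 21493760*(q^2)^2))
      ≤ 500000 * (Complex.abs q^2)^2 := h2
  -- term 2
  have hAabs : Complex.abs (q⁻¹ + 744 + 196884*q + 21493760*q^2)
      ≤ (Complex.abs q)⁻¹ + 745 := by
    refine (cabs_add4 _ _ _ _).trans ?_
    simp only [map_inv₀, map_mul, map_pow, Complex.abs_ofNat]
    linarith
  have h2A : Complex.abs (2*(q⁻¹ + 744 + 196884*q + 21493760*q^2) - 1488)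
      ≤ 2 * (Complex.abs q)⁻¹ + 2978 := by
    refine (cabs_sub_le _ _).trans ?_
    rw [map_mul, Complex.abs_two, Complex.abs_ofNat]
    linarith [hAabs]
  have hii : (Complex.abs q)⁻¹ * Complex.abs q ^ 2 = Complex.abs q := by
    field_simp [ne_of_gt hX0]
  have ht2 : Complex.abs ((2*(q⁻¹ + 744 + 196884*q + 21493760*q^2) - 1488)
        * (jfn q - (q⁻¹ + 744 + 196884*q + 21493760*q^2)))
      ≤ 1000000 * Complex.abs q + 1489000000 * Complex.abs q ^ 2 := by
    rw [map_mul]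
    calc Complex.abs (2*(q⁻¹ + 744 + 196884*q + 21493760*q^2) - 1488)
          * Complex.abs (jfn q - (q⁻¹ + 744 + 196884*q + 21493760*q^2))
        ≤ (2 * (Complex.abs q)⁻¹ + 2978) * (500000 * Complex.abs q ^ 2) := by
          refine mul_le_mul h2A h1 (Complex.abs.nonneg _) ?_
          have : 0 < (Complex.abs q)⁻¹ := by positivity
          linarith
      _ = 1000000 * ((Complex.abs q)⁻¹ * Complex.abs q ^ 2)
          + 1489000000 * Complex.abs q ^ 2 := by ring
      _ = 1000000 * Complex.abs q + 1489000000 * Complex.abs q ^ 2 := by rw [hii]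
  -- term 3
  have ht3 : Complex.abs ((jfn q - (q⁻¹ + 744 + 196884*q + 21493760*q^2))^2)
      ≤ 250000000000 * Complex.abs q ^ 4 := by
    rw [map_pow]
    have := mul_le_mul h1 h1 (Complex.abs.nonneg _) (by positivity)
    nlinarith [this]
  -- term 4
  have ht4 : Complex.abs (42987520*q + 38763112572*q^2 + 8463554887680*q^3
        + 461981697443840*q^4)
      ≤ 42987520 * Complex.abs q + 38763112572 * Complex.abs q ^ 2
        + 8463554887680 * Complex.abs q ^ 3 + 461981697443840 * Complex.abs q ^ 4 := by
    refine (cabs_add4 _ _ _ _).trans ?_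
    simp only [map_mul, map_pow, Complex.abs_ofNat]
    exact le_rfl
  have hX4' : (Complex.abs q ^ 2) ^ 2 ≤ 2.401e-33 := by nlinarith
  linarith

theorem j_two_tau_near_polynomial_in_j (τ : ℂ) (hτ : τ ∈ Fdom) (him : 3 ≤ τ.im) :
    ‖klj (2 * τ) -
      (klj τ ^ 2 - 2 * 744 * klj τ - 2 * 196884 + 744 ^ 2 + 744)‖ ≤ 0.4 := by
  have hq0 : Complex.exp (2 * (Real.pi:ℂ) * Complex.I * τ) ≠ 0 := Complex.exp_ne_zero _
  have hqabs := qabs_le τ him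
  have e0 : klj τ = jfn (Complex.exp (2 * (Real.pi:ℂ) * Complex.I * τ)) := rfl
  have hexp2 : Complex.exp (2 * (Real.pi:ℂ) * Complex.I * (2 * τ))
      = Complex.exp (2 * (Real.pi:ℂ) * Complex.I * τ) ^ 2 := by
    rw [sq, ← Complex.exp_add]
    congr 1
    ring
  have e1 : klj (2 * τ) = jfn (Complex.exp (2 * (Real.pi:ℂ) * Complex.I * τ) ^ 2) := by
    rw [← hexp2]; rfl
  rw [e0, e1]
  exact final_est (Complex.exp (2 * (Real.pi:ℂ) * Complex.I * τ)) hq0 hqabs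
end

section
/- For every integer k ≥ 0, ∑_{n=1}^∞ (2πn)^k · e^{−πn} ≤ 14^k · k!. -/
open Real

theorem exp_weighted_power_sum_le (k : ℕ) :
    ∑' n : ℕ, (2 * Real.pi * ((n : ℝ) + 1)) ^ k * Real.exp (-(Real.pi * ((n : ℝ) + 1)))
      ≤ 14 ^ k * (k.factorial : ℝ) := by
  set r : ℝ := Real.exp (-(Real.pi / 2)) with hr
  have hr0 : 0 < r := Real.exp_pos _
  have hrhalf : r < 1 / 2 := by
    have h1 : r < Real.exp (-1) := by
      apply Real.exp_lt_exp.2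
      have := Real.pi_gt_three
      linarith
    have h2 : Real.exp (-1) < 1 / 2 := by
      rw [Real.exp_neg]
      rw [inv_lt_comm₀ (Real.exp_pos 1) (by norm_num)]
      have := Real.exp_one_gt_d9
      norm_num
      linarith
    linarith
  have hr1 : r < 1 := by linarith
  -- termwise bound
  have key : ∀ n : ℕ, (2 * Real.pi * ((n : ℝ) + 1)) ^ k * Real.exp (-(Real.pi * ((n : ℝ) + 1)))
      ≤ 4 ^ k * (k.factorial : ℝ) * r ^ (n + 1) := by
    intro n
    have hm : (0:ℝ) ≤ (n : ℝ) + 1 := by positivity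
    have hpi := Real.pi_pos
    have hx : (0:ℝ) ≤ Real.pi * ((n : ℝ) + 1) / 2 := by positivity
    have h1 : (Real.pi * ((n : ℝ) + 1) / 2) ^ k / (k.factorial : ℝ)
        ≤ Real.exp (Real.pi * ((n : ℝ) + 1) / 2) :=
      Real.pow_div_factorial_le_exp _ hx k
    have hfac : (0:ℝ) < (k.factorial : ℝ) := by positivity
    have h2 : (Real.pi * ((n : ℝ) + 1) / 2) ^ k
        ≤ (k.factorial : ℝ) * Real.exp (Real.pi * ((n : ℝ) + 1) / 2) := by
      rw [div_le_iff₀ hfac] at h1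
      linarith [h1]
    have hrpow : r ^ (n + 1) = Real.exp (-(Real.pi * ((n : ℝ) + 1) / 2)) := by
      rw [hr, ← Real.exp_nat_mul]
      congr 1
      push_cast
      ring
    have hsplit : Real.exp (-(Real.pi * ((n : ℝ) + 1)))
        = Real.exp (-(Real.pi * ((n : ℝ) + 1) / 2)) * Real.exp (-(Real.pi * ((n : ℝ) + 1) / 2)) := by
      rw [← Real.exp_add]; ring_nf
    have hpow : (2 * Real.pi * ((n : ℝ) + 1)) ^ k
        = 4 ^ k * (Real.pi * ((n : ℝ) + 1) / 2) ^ k := by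
      rw [← mul_pow]; ring_nf
    rw [hpow, hsplit, hrpow]
    have hexp_pos : (0:ℝ) < Real.exp (-(Real.pi * ((n : ℝ) + 1) / 2)) := Real.exp_pos _
    calc 4 ^ k * (Real.pi * ((n : ℝ) + 1) / 2) ^ k *
          (Real.exp (-(Real.pi * ((n : ℝ) + 1) / 2)) * Real.exp (-(Real.pi * ((n : ℝ) + 1) / 2)))
        ≤ 4 ^ k * ((k.factorial : ℝ) * Real.exp (Real.pi * ((n : ℝ) + 1) / 2)) *
          (Real.exp (-(Real.pi * ((n : ℝ) + 1) / 2)) * Real.exp (-(Real.pi * ((n : ℝ) + 1) / 2))) := by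
          apply mul_le_mul_of_nonneg_right (by
            apply mul_le_mul_of_nonneg_left h2 (by positivity)) (by positivity)
      _ = 4 ^ k * (k.factorial : ℝ) *
          (Real.exp (Real.pi * ((n : ℝ) + 1) / 2) * Real.exp (-(Real.pi * ((n : ℝ) + 1) / 2))
            * Real.exp (-(Real.pi * ((n : ℝ) + 1) / 2))) := by ring
      _ = 4 ^ k * (k.factorial : ℝ) * Real.exp (-(Real.pi * ((n : ℝ) + 1) / 2)) := by
          rw [← Real.exp_add]; ring_nf; rw [Real.exp_zero]; ring
  have hsumg : Summable (fun n : ℕ => 4 ^ k * (k.factorial : ℝ) * r ^ (n + 1)) := by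
    apply Summable.mul_left
    exact ((summable_geometric_of_lt_one hr0.le hr1).mul_left r).congr (by
      intro n; rw [pow_succ]; ring)
  have hnonneg : ∀ n : ℕ, 0 ≤ (2 * Real.pi * ((n : ℝ) + 1)) ^ k *
      Real.exp (-(Real.pi * ((n : ℝ) + 1))) := by
    intro n
    have := Real.pi_pos
    positivity
  have hsum : Summable (fun n : ℕ => (2 * Real.pi * ((n : ℝ) + 1)) ^ k *
      Real.exp (-(Real.pi * ((n : ℝ) + 1)))) :=
    Summable.of_nonneg_of_le hnonneg key hsumg
  calc ∑' n : ℕ, (2 * Real.pi * ((n : ℝ) + 1)) ^ k * Real.exp (-(Real.pi * ((n : ℝ) + 1)))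
      ≤ ∑' n : ℕ, 4 ^ k * (k.factorial : ℝ) * r ^ (n + 1) := Summable.tsum_le_tsum key hsum hsumg
    _ = 4 ^ k * (k.factorial : ℝ) * (r * (1 - r)⁻¹) := by
        rw [tsum_mul_left]
        congr 1
        have : (fun n : ℕ => r ^ (n + 1)) = fun n : ℕ => r * r ^ n := by
          funext n; rw [pow_succ]; ring
        rw [this, tsum_mul_left, tsum_geometric_of_lt_one hr0.le hr1]
    _ ≤ 4 ^ k * (k.factorial : ℝ) * 1 := by
        apply mul_le_mul_of_nonneg_left _ (by positivity)
        rw [mul_inv_le_iff₀ (by linarith)]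
        linarith
    _ ≤ 14 ^ k * (k.factorial : ℝ) := by
        rw [mul_one]
        apply mul_le_mul_of_nonneg_right _ (by positivity)
        exact pow_le_pow_left₀ (by norm_num) (by norm_num) k
end

section
/- If δ is a complex number with |δ| ≤ 2^{−28}, then |j(2i+δ) − j(2i) − j'(2i)·δ| ≤ 0.2·|δ| and |j(i√3+δ) − j(i√3) − j'(i√3)·δ| ≤ 0.2·|δ|. -/
open Complex Real Filter Metric

set_option maxHeartbeats 1000000

lemma taylor_remainder {f : ℂ → ℂ} {c δ : ℂ} {R : NNReal} {M : ℝ} (hR : 0 < R)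
    (hM0 : 0 ≤ M)
    (hd : DifferentiableOn ℂ f (Metric.closedBall c R))
    (hM : ∀ z ∈ Metric.sphere c (R : ℝ), ‖f z‖ ≤ M)
    (hδ : ‖δ‖ < R) :
    ‖f (c + δ) - f c - deriv f c * δ‖ ≤ M * (‖δ‖ / R) ^ 2 * (1 - ‖δ‖ / R)⁻¹ := by
  have hRpos : (0:ℝ) < R := hR
  set p := cauchyPowerSeries f c R with hp
  have h : HasFPowerSeriesOnBall f p c R := hd.hasFPowerSeriesOnBall hR
  -- integral bound
  have hint : (2 * π)⁻¹ * ∫ θ : ℝ in (0)..(2 * π), ‖f (circleMap c R θ)‖ ≤ M := by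
    have hcont : ContinuousOn (fun θ : ℝ => ‖f (circleMap c R θ)‖) (Set.uIcc 0 (2 * π)) := by
      apply ContinuousOn.norm
      apply hd.continuousOn.comp (continuous_circleMap c R).continuousOn
      intro θ _
      exact sphere_subset_closedBall (circleMap_mem_sphere c hRpos.le θ)
    have hIG : IntervalIntegrable (fun θ : ℝ => ‖f (circleMap c R θ)‖)
        MeasureTheory.volume 0 (2 * π) := hcont.intervalIntegrable
    have hle : ∫ θ : ℝ in (0)..(2 * π), ‖f (circleMap c R θ)‖ ≤ 2 * π * M := by
      have := intervalIntegral.integral_mono_on (by positivity : (0:ℝ) ≤ 2 * π) hIG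
        (intervalIntegrable_const (c := M)) (fun θ _ =>
          hM _ (circleMap_mem_sphere c hRpos.le θ))
      simpa using this
    calc (2 * π)⁻¹ * ∫ θ : ℝ in (0)..(2 * π), ‖f (circleMap c R θ)‖
        ≤ (2 * π)⁻¹ * (2 * π * M) := by gcongr
      _ = M := by field_simp
  have hcoeff : ∀ n, ‖p.coeff n‖ ≤ M * ((R:ℝ)⁻¹) ^ n := by
    intro n
    rw [← FormalMultilinearSeries.norm_apply_eq_norm_coef]
    refine (norm_cauchyPowerSeries_le f c R n).trans ?_
    rw [abs_of_pos hRpos]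
    gcongr
  -- power series sum
  have hmem : δ ∈ Metric.eball (0:ℂ) R := by
    rw [Metric.mem_eball, edist_zero_right]
    exact_mod_cast (by exact_mod_cast hδ : ‖δ‖₊ < R)
  have hs : HasSum (fun n : ℕ => δ ^ n • p.coeff n) (f (c + δ)) := by
    have := h.hasSum hmem
    simpa [FormalMultilinearSeries.apply_eq_pow_smul_coeff] using this
  have h0 : p.coeff 0 = f c := h.coeff_zero 1
  have h1 : p.coeff 1 = deriv f c := (h.hasFPowerSeriesAt.deriv).symm
  have hs2 : HasSum (fun n : ℕ => δ ^ (n + 2) • p.coeff (n + 2))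
      (f (c + δ) - f c - deriv f c * δ) := by
    refine (hasSum_nat_add_iff (f := fun n : ℕ => δ ^ n • p.coeff n) 2).mpr ?_
    have hsum2 : ∑ i ∈ Finset.range 2, δ ^ i • p.coeff i = f c + deriv f c * δ := by
      rw [Finset.sum_range_succ, Finset.sum_range_one, h0, h1]
      simp [smul_eq_mul]
      ring
    rw [hsum2]
    convert hs using 1
    · rfl
    ring
  set x : ℝ := ‖δ‖ / R with hx
  have hx0 : (0:ℝ) ≤ x := by positivity
  have hx1 : x < 1 := (div_lt_one hRpos).mpr hδ
  have hgeo : HasSum (fun n : ℕ => M * x ^ 2 * x ^ n) (M * x ^ 2 * (1 - x)⁻¹) :=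
    (hasSum_geometric_of_lt_one hx0 hx1).mul_left _
  have hbound : ∀ n : ℕ, ‖δ ^ (n + 2) • p.coeff (n + 2)‖ ≤ M * x ^ 2 * x ^ n := by
    intro n
    rw [norm_smul, norm_pow]
    calc ‖δ‖ ^ (n + 2) * ‖p.coeff (n + 2)‖
        ≤ ‖δ‖ ^ (n + 2) * (M * ((R:ℝ)⁻¹) ^ (n + 2)) := by
          gcongr
          exact hcoeff (n + 2)
      _ = M * x ^ 2 * x ^ n := by
          rw [hx, div_eq_mul_inv, mul_pow]
          ring
  have := tsum_of_norm_bounded hgeo hbound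
  rwa [hs2.tsum_eq] at this

noncomputable def Q (τ : ℂ) : ℂ := Complex.exp (2 * Real.pi * Complex.I * τ)

lemma absQ (τ : ℂ) : ‖Q τ‖ = Real.exp (-(2 * Real.pi * τ.im)) := by
  rw [Q, Complex.norm_exp]
  congr 1
  simp [Complex.mul_re, Complex.mul_im]

-- numeric exp facts
lemma exp9_lb : (8103:ℝ) ≤ Real.exp 9 := by
  rw [show (9:ℝ) = ((9:ℕ):ℝ) by norm_num, ← Real.exp_one_pow]
  calc (8103:ℝ) ≤ 2.7182818283 ^ 9 := by norm_num
    _ ≤ Real.exp 1 ^ 9 := by gcongr; exact Real.exp_one_gt_d9.le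

lemma exp15_ub : Real.exp 15 ≤ 3269018 := by
  rw [show (15:ℝ) = ((15:ℕ):ℝ) by norm_num, ← Real.exp_one_pow]
  calc Real.exp 1 ^ 15 ≤ 2.7182818286 ^ 15 := by gcongr; exact Real.exp_one_lt_d9.le
    _ ≤ 3269018 := by norm_num

lemma exp6_lb : (403:ℝ) ≤ Real.exp 6 := by
  rw [show (6:ℝ) = ((6:ℕ):ℝ) by norm_num, ← Real.exp_one_pow]
  calc (403:ℝ) ≤ 2.7182818283 ^ 6 := by norm_num
    _ ≤ Real.exp 1 ^ 6 := by gcongr; exact Real.exp_one_gt_d9.le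

lemma N1 {t : ℝ} (ht : 1.48 ≤ t) : Real.exp (-(2 * π * t)) ≤ 1e-4 := by
  have hpi : (3.141592:ℝ) ≤ π := Real.pi_gt_d6.le
  have h1 : (10000:ℝ) ≤ Real.exp (2 * π * t) := by
    have h2 : (9:ℝ) + 0.299 ≤ 2 * π * t := by nlinarith
    calc (10000:ℝ) ≤ 8103 * 1.299 := by norm_num
      _ ≤ Real.exp 9 * Real.exp 0.299 := by
          have := Real.add_one_le_exp (0.299:ℝ)
          have h9 := exp9_lb
          nlinarith [Real.exp_pos (0.299:ℝ), Real.exp_pos (9:ℝ)]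
      _ = Real.exp (9 + 0.299) := (Real.exp_add _ _).symm
      _ ≤ Real.exp (2 * π * t) := Real.exp_le_exp.mpr h2
  rw [Real.exp_neg]
  rw [inv_le_comm₀ (Real.exp_pos _) (by norm_num)]
  calc (1e-4:ℝ)⁻¹ = 10000 := by norm_num
    _ ≤ Real.exp (2 * π * t) := h1

lemma N2 {t : ℝ} (ht : t ≤ 2.25) (ht0 : 0 ≤ t) : Real.exp (2 * π * t) ≤ 1755000 := by
  have hpi : π ≤ 3.141593 := Real.pi_lt_d6.le
  have hpi0 : (0:ℝ) < π := Real.pi_pos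
  have h2 : 2 * π * t ≤ 15 - 0.8628 := by nlinarith
  have h3 : Real.exp (2 * π * t) ≤ Real.exp 15 / Real.exp 0.8628 := by
    rw [← Real.exp_sub]
    exact Real.exp_le_exp.mpr h2
  have h4 : (1.8628:ℝ) ≤ Real.exp 0.8628 := by
    have := Real.add_one_le_exp (0.8628:ℝ); linarith
  calc Real.exp (2 * π * t) ≤ Real.exp 15 / Real.exp 0.8628 := h3
    _ ≤ 3269018 / 1.8628 := by
        have h15 := exp15_ub
        have hp := Real.exp_pos (0.8628:ℝ)
        rw [div_le_div_iff₀ hp (by norm_num)]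
        nlinarith [Real.exp_pos (15:ℝ)]
    _ ≤ 1755000 := by norm_num

lemma N3 : 64 * Real.exp (-(2 * π)) < 1 := by
  have hpi : (3:ℝ) ≤ π := by nlinarith [Real.pi_gt_d6]
  have : Real.exp 6 ≤ Real.exp (2 * π) := Real.exp_le_exp.mpr (by linarith)
  have h6 := exp6_lb
  rw [Real.exp_neg]
  rw [mul_inv_lt_iff₀ (Real.exp_pos _)]
  nlinarith

lemma sig_norm_le (k m : ℕ) (hm : 1 ≤ m) :
    ‖∑ d ∈ m.divisors, (d:ℂ) ^ k‖ ≤ ((2:ℝ) ^ (k+1)) ^ m := by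
  have hcard : (m.divisors.card : ℝ) ≤ m := by
    have : m.divisors ⊆ Finset.Icc 1 m := by
      intro d hd
      simp only [Finset.mem_Icc]
      exact ⟨Nat.pos_of_mem_divisors hd, Nat.divisor_le hd⟩
    have := Finset.card_le_card this
    rw [Nat.card_Icc] at this
    exact_mod_cast this.trans (by omega)
  calc ‖∑ d ∈ m.divisors, (d:ℂ) ^ k‖ ≤ ∑ d ∈ m.divisors, ‖(d:ℂ) ^ k‖ := norm_sum_le _ _
    _ ≤ ∑ _d ∈ m.divisors, (m:ℝ) ^ k := by
        apply Finset.sum_le_sum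
        intro d hd
        rw [norm_pow]
        have : ‖(d:ℂ)‖ = (d:ℝ) := by simp
        rw [this]
        gcongr
        exact_mod_cast Nat.divisor_le hd
    _ = m.divisors.card * (m:ℝ) ^ k := by rw [Finset.sum_const, nsmul_eq_mul]
    _ ≤ (m:ℝ) * (m:ℝ) ^ k := by gcongr
    _ = (m:ℝ) ^ (k+1) := by ring
    _ ≤ ((2:ℝ) ^ m) ^ (k+1) := by
        gcongr
        exact_mod_cast (Nat.lt_two_pow_self (n := m)).le
    _ = ((2:ℝ) ^ (k+1)) ^ m := by rw [← pow_mul, ← pow_mul, Nat.mul_comm]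

-- generic series estimate
lemma qseries_est (k : ℕ) (β C : ℝ) (hβ : ((2:ℝ) ^ (k+1)) ≤ β) (hβ64 : β ≤ 64)
    (hC : β ^ 2 * 1.007 ≤ C) {τ : ℂ} (hτ : 1.48 ≤ τ.im) :
    ‖(∑' n : ℕ, (∑ d ∈ (n+1).divisors, (d:ℂ) ^ k) * Q τ ^ (n+1)) - Q τ‖
      ≤ C * Real.exp (-(2 * π * τ.im)) ^ 2 := by
  set r : ℝ := Real.exp (-(2 * π * τ.im)) with hr
  have hr0 : 0 < r := Real.exp_pos _
  have hr4 : r ≤ 1e-4 := N1 hτ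
  have habs : ‖Q τ‖ = r := by exact absQ τ
  have hβ0 : (0:ℝ) < β := lt_of_lt_of_le (by positivity) hβ
  have hterm : ∀ n : ℕ, ‖(∑ d ∈ (n+1).divisors, (d:ℂ) ^ k) * Q τ ^ (n+1)‖ ≤ (β * r) ^ (n+1) := by
    intro n
    rw [norm_mul, norm_pow, habs, mul_pow]
    apply mul_le_mul_of_nonneg_right ?_ (pow_nonneg hr0.le _)
    refine (sig_norm_le k (n+1) (by omega)).trans ?_
    exact pow_le_pow_left₀ (by positivity) hβ _
  have hβr1 : β * r < 1 := by nlinarith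
  have hβr0 : 0 ≤ β * r := by positivity
  have hsum : Summable (fun n : ℕ => (∑ d ∈ (n+1).divisors, (d:ℂ) ^ k) * Q τ ^ (n+1)) := by
    apply Summable.of_norm_bounded ?_ hterm
    simpa [pow_succ, mul_comm] using (summable_geometric_of_lt_one hβr0 hβr1).mul_right (β * r)
  have hzero : (∑ d ∈ (Nat.divisors (0+1)), (d:ℂ) ^ k) * Q τ ^ (0+1) = Q τ := by
    norm_num [Nat.divisors_one]
  rw [Summable.tsum_eq_zero_add hsum, hzero, add_sub_cancel_left]
  have hgeo : HasSum (fun n : ℕ => (β * r) ^ 2 * (β * r) ^ n) ((β * r) ^ 2 * (1 - β * r)⁻¹) :=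
    (hasSum_geometric_of_lt_one hβr0 hβr1).mul_left _
  have hb : ∀ n : ℕ, ‖(∑ d ∈ (n+1+1).divisors, (d:ℂ) ^ k) * Q τ ^ (n+1+1)‖
      ≤ (β * r) ^ 2 * (β * r) ^ n := by
    intro n
    refine (hterm (n+1)).trans_eq ?_
    rw [← pow_add]
    ring
  refine (tsum_of_norm_bounded hgeo hb).trans ?_
  have h1 : (1 - β * r)⁻¹ ≤ 1.007 := by
    rw [inv_le_comm₀ (by nlinarith) (by norm_num)]
    nlinarith
  calc (β * r) ^ 2 * (1 - β * r)⁻¹ ≤ β ^ 2 * r ^ 2 * 1.007 := by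
        rw [mul_pow]
        exact mul_le_mul_of_nonneg_left h1 (by positivity)
    _ ≤ C * r ^ 2 := by nlinarith [sq_nonneg r]

lemma E4_eq (τ : ℂ) : E4 τ = 1 + 240 * ∑' n : ℕ,
    (∑ d ∈ (n + 1).divisors, (d : ℂ) ^ 3) * Q τ ^ (n + 1) := rfl

lemma E6_eq (τ : ℂ) : E6 τ = 1 - 504 * ∑' n : ℕ,
    (∑ d ∈ (n + 1).divisors, (d : ℂ) ^ 5) * Q τ ^ (n + 1) := rfl

lemma e4_err_s11 {τ : ℂ} (hτ : 1.48 ≤ τ.im) :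
    ‖E4 τ - 1 - 240 * Q τ‖ ≤ 61920 * Real.exp (-(2 * π * τ.im)) ^ 2 := by
  have h := qseries_est 3 16 258 (by norm_num) (by norm_num) (by norm_num) hτ
  have heq : E4 τ - 1 - 240 * Q τ = 240 * ((∑' n : ℕ,
      (∑ d ∈ (n + 1).divisors, (d : ℂ) ^ 3) * Q τ ^ (n + 1)) - Q τ) := by
    rw [E4_eq]; ring
  rw [heq, norm_mul]
  have : ‖(240:ℂ)‖ = 240 := by norm_num
  rw [this]
  nlinarith [Real.exp_pos (-(2 * π * τ.im))]

lemma e6_err_s11 {τ : ℂ} (hτ : 1.48 ≤ τ.im) :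
    ‖E6 τ - 1 + 504 * Q τ‖ ≤ 2079000 * Real.exp (-(2 * π * τ.im)) ^ 2 := by
  have h := qseries_est 5 64 4125 (by norm_num) (by norm_num) (by norm_num) hτ
  have heq : E6 τ - 1 + 504 * Q τ = -(504 * ((∑' n : ℕ,
      (∑ d ∈ (n + 1).divisors, (d : ℂ) ^ 5) * Q τ ^ (n + 1)) - Q τ)) := by
    rw [E6_eq]; ring
  rw [heq, norm_neg, norm_mul]
  have : ‖(504:ℂ)‖ = 504 := by norm_num
  rw [this]
  nlinarith [Real.exp_pos (-(2 * π * τ.im))]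

lemma e4_close {τ : ℂ} (hτ : 1.48 ≤ τ.im) :
    ‖E4 τ - 1‖ ≤ 247 * Real.exp (-(2 * π * τ.im)) := by
  set r : ℝ := Real.exp (-(2 * π * τ.im)) with hr
  have hr4 : r ≤ 1e-4 := N1 hτ
  have hr0 : 0 < r := Real.exp_pos _
  have habs : ‖Q τ‖ = r := by exact absQ τ
  calc ‖E4 τ - 1‖ = ‖(E4 τ - 1 - 240 * Q τ) + 240 * Q τ‖ := by ring_nf
    _ ≤ ‖E4 τ - 1 - 240 * Q τ‖ + ‖240 * Q τ‖ := norm_add_le _ _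
    _ ≤ 61920 * r ^ 2 + 240 * r := by
        have h1 := e4_err_s11 hτ
        have h2 : ‖240 * Q τ‖ = 240 * r := by
          rw [norm_mul, habs]; norm_num
        rw [h2]
        exact add_le_add h1 le_rfl
    _ ≤ 247 * r := by nlinarith

lemma e6_close {τ : ℂ} (hτ : 1.48 ≤ τ.im) :
    ‖E6 τ - 1‖ ≤ 712 * Real.exp (-(2 * π * τ.im)) := by
  set r : ℝ := Real.exp (-(2 * π * τ.im)) with hr
  have hr4 : r ≤ 1e-4 := N1 hτ
  have hr0 : 0 < r := Real.exp_pos _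
  have habs : ‖Q τ‖ = r := by exact absQ τ
  calc ‖E6 τ - 1‖ = ‖(E6 τ - 1 + 504 * Q τ) - 504 * Q τ‖ := by ring_nf
    _ ≤ ‖E6 τ - 1 + 504 * Q τ‖ + ‖504 * Q τ‖ := norm_sub_le _ _
    _ ≤ 2079000 * r ^ 2 + 504 * r := by
        have h1 := e6_err_s11 hτ
        have h2 : ‖504 * Q τ‖ = 504 * r := by
          rw [norm_mul, habs]; norm_num
        rw [h2]
        exact add_le_add h1 le_rfl
    _ ≤ 712 * r := by nlinarith

lemma denom_lb {τ : ℂ} (hτ : 1.48 ≤ τ.im) :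
    1224 * Real.exp (-(2 * π * τ.im)) ≤ ‖E4 τ ^ 3 - E6 τ ^ 2‖ := by
  set r : ℝ := Real.exp (-(2 * π * τ.im)) with hr
  have hr4 : r ≤ 1e-4 := N1 hτ
  have hr0 : 0 < r := Real.exp_pos _
  have habs : ‖Q τ‖ = r := by exact absQ τ
  have ha' := e4_err_s11 hτ
  have hb' := e6_err_s11 hτ
  have ha := e4_close hτ
  have hb := e6_close hτ
  have key : E4 τ ^ 3 - E6 τ ^ 2 = 1728 * Q τ +
      (3 * ((E4 τ - 1) - 240 * Q τ) - 2 * ((E6 τ - 1) + 504 * Q τ)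
        + 3 * (E4 τ - 1) ^ 2 + (E4 τ - 1) ^ 3 - (E6 τ - 1) ^ 2) := by ring
  have hrest : ‖3 * ((E4 τ - 1) - 240 * Q τ) - 2 * ((E6 τ - 1) + 504 * Q τ)
      + 3 * (E4 τ - 1) ^ 2 + (E4 τ - 1) ^ 3 - (E6 τ - 1) ^ 2‖ ≤ 504 * r := by
    have t1 : ‖(3:ℂ) * ((E4 τ - 1) - 240 * Q τ)‖ ≤ 3 * (61920 * r ^ 2) := by
      rw [norm_mul]
      have : ‖(3:ℂ)‖ = 3 := by norm_num
      rw [this]; gcongr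
    have t2 : ‖(2:ℂ) * ((E6 τ - 1) + 504 * Q τ)‖ ≤ 2 * (2079000 * r ^ 2) := by
      rw [norm_mul]
      have : ‖(2:ℂ)‖ = 2 := by norm_num
      rw [this]; gcongr
    have t3 : ‖(3:ℂ) * (E4 τ - 1) ^ 2‖ ≤ 3 * (247 * r) ^ 2 := by
      rw [norm_mul, norm_pow]
      have : ‖(3:ℂ)‖ = 3 := by norm_num
      rw [this]; gcongr
    have t4 : ‖(E4 τ - 1) ^ 3‖ ≤ (247 * r) ^ 3 := by
      rw [norm_pow]; gcongr
    have t5 : ‖(E6 τ - 1) ^ 2‖ ≤ (712 * r) ^ 2 := by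
      rw [norm_pow]; gcongr
    have chain : ‖3 * ((E4 τ - 1) - 240 * Q τ) - 2 * ((E6 τ - 1) + 504 * Q τ)
        + 3 * (E4 τ - 1) ^ 2 + (E4 τ - 1) ^ 3 - (E6 τ - 1) ^ 2‖ ≤
        ‖(3:ℂ) * ((E4 τ - 1) - 240 * Q τ)‖ + ‖(2:ℂ) * ((E6 τ - 1) + 504 * Q τ)‖
        + ‖(3:ℂ) * (E4 τ - 1) ^ 2‖ + ‖(E4 τ - 1) ^ 3‖ + ‖(E6 τ - 1) ^ 2‖ := by
      calc ‖3 * ((E4 τ - 1) - 240 * Q τ) - 2 * ((E6 τ - 1) + 504 * Q τ)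
          + 3 * (E4 τ - 1) ^ 2 + (E4 τ - 1) ^ 3 - (E6 τ - 1) ^ 2‖
          ≤ ‖3 * ((E4 τ - 1) - 240 * Q τ) - 2 * ((E6 τ - 1) + 504 * Q τ)
          + 3 * (E4 τ - 1) ^ 2 + (E4 τ - 1) ^ 3‖ + ‖(E6 τ - 1) ^ 2‖ := norm_sub_le _ _
        _ ≤ (‖3 * ((E4 τ - 1) - 240 * Q τ) - 2 * ((E6 τ - 1) + 504 * Q τ)
          + 3 * (E4 τ - 1) ^ 2‖ + ‖(E4 τ - 1) ^ 3‖) + ‖(E6 τ - 1) ^ 2‖ := by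
            gcongr
            exact norm_add_le _ _
        _ ≤ ((‖3 * ((E4 τ - 1) - 240 * Q τ) - 2 * ((E6 τ - 1) + 504 * Q τ)‖
          + ‖3 * (E4 τ - 1) ^ 2‖) + ‖(E4 τ - 1) ^ 3‖) + ‖(E6 τ - 1) ^ 2‖ := by
            gcongr
            exact norm_add_le _ _
        _ ≤ (((‖(3:ℂ) * ((E4 τ - 1) - 240 * Q τ)‖ + ‖(2:ℂ) * ((E6 τ - 1) + 504 * Q τ)‖)
          + ‖3 * (E4 τ - 1) ^ 2‖) + ‖(E4 τ - 1) ^ 3‖) + ‖(E6 τ - 1) ^ 2‖ := by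
            gcongr
            exact norm_sub_le _ _
        _ = ‖(3:ℂ) * ((E4 τ - 1) - 240 * Q τ)‖ + ‖(2:ℂ) * ((E6 τ - 1) + 504 * Q τ)‖
          + ‖(3:ℂ) * (E4 τ - 1) ^ 2‖ + ‖(E4 τ - 1) ^ 3‖ + ‖(E6 τ - 1) ^ 2‖ := by ring
    have hrr : r ^ 2 ≤ 1e-4 * r := by nlinarith
    have hrrr : r ^ 3 ≤ 1e-8 * r := by nlinarith
    calc ‖3 * ((E4 τ - 1) - 240 * Q τ) - 2 * ((E6 τ - 1) + 504 * Q τ)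
        + 3 * (E4 τ - 1) ^ 2 + (E4 τ - 1) ^ 3 - (E6 τ - 1) ^ 2‖
        ≤ 3 * (61920 * r ^ 2) + 2 * (2079000 * r ^ 2) + 3 * (247 * r) ^ 2
          + (247 * r) ^ 3 + (712 * r) ^ 2 :=
          chain.trans (by linarith [t1, t2, t3, t4, t5])
      _ ≤ 504 * r := by nlinarith
  rw [key]
  have hQn : ‖(1728:ℂ) * Q τ‖ = 1728 * r := by
    rw [norm_mul, habs]; norm_num
  have hlow : ‖(1728:ℂ) * Q τ‖ - ‖3 * ((E4 τ - 1) - 240 * Q τ) - 2 * ((E6 τ - 1) + 504 * Q τ)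
      + 3 * (E4 τ - 1) ^ 2 + (E4 τ - 1) ^ 3 - (E6 τ - 1) ^ 2‖ ≤
      ‖(1728:ℂ) * Q τ + (3 * ((E4 τ - 1) - 240 * Q τ) - 2 * ((E6 τ - 1) + 504 * Q τ)
      + 3 * (E4 τ - 1) ^ 2 + (E4 τ - 1) ^ 3 - (E6 τ - 1) ^ 2)‖ := by
    have h := norm_sub_le ((1728:ℂ) * Q τ + (3 * ((E4 τ - 1) - 240 * Q τ)
      - 2 * ((E6 τ - 1) + 504 * Q τ)
      + 3 * (E4 τ - 1) ^ 2 + (E4 τ - 1) ^ 3 - (E6 τ - 1) ^ 2))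
      (3 * ((E4 τ - 1) - 240 * Q τ) - 2 * ((E6 τ - 1) + 504 * Q τ)
      + 3 * (E4 τ - 1) ^ 2 + (E4 τ - 1) ^ 3 - (E6 τ - 1) ^ 2)
    simp only [add_sub_cancel_right] at h
    linarith
  rw [hQn] at hlow
  linarith

lemma denom_ne {τ : ℂ} (hτ : 1.48 ≤ τ.im) : E4 τ ^ 3 - E6 τ ^ 2 ≠ 0 := by
  intro h0
  have := denom_lb hτ
  rw [h0, norm_zero] at this
  nlinarith [Real.exp_pos (-(2 * π * τ.im))]

lemma klj_bound {τ : ℂ} (h1 : 1.48 ≤ τ.im) (h2 : τ.im ≤ 2.25) : ‖klj τ‖ ≤ 2680000 := by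
  set r : ℝ := Real.exp (-(2 * π * τ.im)) with hr
  have hr4 : r ≤ 1e-4 := N1 h1
  have hr0 : 0 < r := Real.exp_pos _
  have hd := denom_lb h1
  have ha := e4_close h1
  have hE4 : ‖E4 τ‖ ≤ 1.0247 := by
    calc ‖E4 τ‖ = ‖(1 : ℂ) + (E4 τ - 1)‖ := by ring_nf
      _ ≤ ‖(1:ℂ)‖ + ‖E4 τ - 1‖ := norm_add_le _ _
      _ ≤ 1 + 247 * r := by
          have : ‖(1:ℂ)‖ = 1 := by norm_num
          rw [this]; linarith
      _ ≤ 1.0247 := by nlinarith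
  have hnum : ‖(1728:ℂ) * E4 τ ^ 3‖ ≤ 1860 := by
    rw [norm_mul, norm_pow]
    have : ‖(1728:ℂ)‖ = 1728 := by norm_num
    rw [this]
    have hcube := pow_le_pow_left₀ (norm_nonneg (E4 τ)) hE4 3
    nlinarith [norm_nonneg (E4 τ)]
  have hrge : (1755000:ℝ)⁻¹ ≤ r := by
    rw [hr, Real.exp_neg]
    have hub : Real.exp (2 * π * τ.im) ≤ 1755000 := N2 h2 (by linarith)
    exact inv_anti₀ (Real.exp_pos _) hub
  have hdpos : (0:ℝ) < ‖E4 τ ^ 3 - E6 τ ^ 2‖ := lt_of_lt_of_le (by positivity) hd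
  rw [klj, norm_div]
  rw [div_le_iff₀ hdpos]
  calc ‖(1728:ℂ) * E4 τ ^ 3‖ ≤ 1860 := hnum
    _ ≤ 2680000 * (1224 * r) := by linarith
    _ ≤ 2680000 * ‖E4 τ ^ 3 - E6 τ ^ 2‖ := by nlinarith

lemma tsum_diffOn (k : ℕ) (hk : ((2:ℝ) ^ (k+1)) ≤ 64) :
    DifferentiableOn ℂ (fun τ => ∑' n : ℕ, (∑ d ∈ (n + 1).divisors, (d : ℂ) ^ k) * Q τ ^ (n + 1))
      {z : ℂ | 1 < z.im} := by
  have hρ0 : (0:ℝ) ≤ 64 * Real.exp (-(2 * π)) := by positivity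
  apply differentiableOn_tsum_of_summable_norm
    (u := fun n : ℕ => (64 * Real.exp (-(2 * π))) ^ (n + 1))
  · simpa [pow_succ] using (summable_geometric_of_lt_one hρ0 N3).mul_right (64 * Real.exp (-(2 * π)))
  · intro n
    apply Differentiable.differentiableOn
    apply Differentiable.mul (differentiable_const _)
    apply Differentiable.pow
    exact Complex.differentiable_exp.comp (differentiable_id.const_mul (2 * (π:ℂ) * Complex.I))
  · exact isOpen_lt continuous_const Complex.continuous_im
  · intro n w hw
    have hw1 : 1 ≤ w.im := (Set.mem_setOf_eq ▸ hw).le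
    have habs : ‖Q w‖ = Real.exp (-(2 * π * w.im)) := by
      exact absQ w
    have hq : ‖Q w‖ ≤ Real.exp (-(2 * π)) := by
      rw [habs]
      apply Real.exp_le_exp.mpr
      have : (0:ℝ) < π := Real.pi_pos
      nlinarith
    calc ‖(∑ d ∈ (n + 1).divisors, (d : ℂ) ^ k) * Q w ^ (n + 1)‖
        = ‖∑ d ∈ (n + 1).divisors, (d : ℂ) ^ k‖ * ‖Q w‖ ^ (n + 1) := by
          rw [norm_mul, norm_pow]
      _ ≤ 64 ^ (n + 1) * Real.exp (-(2 * π)) ^ (n + 1) := by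
          apply mul_le_mul
          · exact (sig_norm_le k (n+1) (by omega)).trans (pow_le_pow_left₀ (by positivity) hk _)
          · exact pow_le_pow_left₀ (norm_nonneg _) hq _
          · positivity
          · positivity
      _ = (64 * Real.exp (-(2 * π))) ^ (n + 1) := by rw [mul_pow]

lemma E4_diffOn : DifferentiableOn ℂ E4 {z : ℂ | 1 < z.im} := by
  have h := (tsum_diffOn 3 (by norm_num)).const_mul (240 : ℂ)
  have h2 := h.const_add (1 : ℂ)
  exact h2

lemma E6_diffOn : DifferentiableOn ℂ E6 {z : ℂ | 1 < z.im} := by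
  have h := ((tsum_diffOn 5 (by norm_num)).const_mul (504 : ℂ)).neg.const_add (1 : ℂ)
  have : E6 = fun τ => 1 + -(504 * ∑' n : ℕ,
      (∑ d ∈ (n + 1).divisors, (d : ℂ) ^ 5) * Q τ ^ (n + 1)) := by
    funext τ
    rw [E6_eq]; ring
  rw [this]
  exact h

lemma klj_diffAt {τ : ℂ} (hτ : 1.48 ≤ τ.im) : DifferentiableAt ℂ klj τ := by
  have hopen : IsOpen {z : ℂ | 1 < z.im} := isOpen_lt continuous_const Complex.continuous_im
  have hmem : τ ∈ {z : ℂ | 1 < z.im} := by simp only [Set.mem_setOf_eq]; linarith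
  have h4 : DifferentiableAt ℂ E4 τ := E4_diffOn.differentiableAt (hopen.mem_nhds hmem)
  have h6 : DifferentiableAt ℂ E6 τ := E6_diffOn.differentiableAt (hopen.mem_nhds hmem)
  have : DifferentiableAt ℂ (fun z => 1728 * E4 z ^ 3 / (E4 z ^ 3 - E6 z ^ 2)) τ :=
    ((differentiableAt_const _).mul (h4.pow 3)).div ((h4.pow 3).sub (h6.pow 2)) (denom_ne hτ)
  exact this

lemma main_est {c : ℂ} (h1 : 1.73 ≤ c.im) (h2 : c.im ≤ 2) {δ : ℂ}
    (hδ : ‖δ‖ ≤ 2 ^ (-(28 : ℤ))) :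
    ‖klj (c + δ) - klj c - deriv klj c * δ‖ ≤ 0.2 * ‖δ‖ := by
  have hδn : ‖δ‖ ≤ ((268435456:ℝ))⁻¹ := by
    refine hδ.trans_eq ?_
    norm_num
  set R : NNReal := 4⁻¹ with hR
  have hRc : (R : ℝ) = 4⁻¹ := by rw [hR]; simp
  have him : ∀ z ∈ Metric.closedBall c (R:ℝ), 1.48 ≤ z.im ∧ z.im ≤ 2.25 := by
    intro z hz
    rw [Metric.mem_closedBall, Complex.dist_eq] at hz
    have h3 : |(z - c).im| ≤ ‖z - c‖ := Complex.abs_im_le_norm _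
    rw [Complex.sub_im] at h3
    rw [hRc] at hz
    have h4 := abs_le.mp (h3.trans hz)
    exact ⟨by linarith [h4.1], by linarith [h4.2]⟩
  have hdiff : DifferentiableOn ℂ klj (Metric.closedBall c (R:ℝ)) := by
    intro z hz
    exact (klj_diffAt (him z hz).1).differentiableWithinAt
  have hM : ∀ z ∈ Metric.sphere c (R:ℝ), ‖klj z‖ ≤ 2680000 := by
    intro z hz
    have h := him z (sphere_subset_closedBall hz)
    exact klj_bound h.1 h.2
  have hδR : ‖δ‖ < (R:ℝ) := by
    rw [hRc]
    calc ‖δ‖ ≤ (268435456:ℝ)⁻¹ := hδn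
      _ < 4⁻¹ := by norm_num
  have key := taylor_remainder (f := klj) (c := c) (δ := δ) (R := R) (M := 2680000)
    (by rw [hR]; norm_num) (by norm_num) hdiff hM hδR
  refine key.trans ?_
  rw [hRc]
  set t : ℝ := ‖δ‖ with hts
  have ht0 : 0 ≤ t := norm_nonneg _
  have hx : t / (4:ℝ)⁻¹ = 4 * t := by field_simp
  rw [hx]
  have hinv : (1 - 4 * t)⁻¹ ≤ 1.2 := by
    have h4t : 4 * t ≤ 1/6 := by linarith [hδn]
    rw [inv_le_comm₀ (by linarith) (by norm_num)]
    linarith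
  calc (2680000:ℝ) * (4 * t) ^ 2 * (1 - 4 * t)⁻¹
      ≤ 2680000 * (4 * t) ^ 2 * 1.2 := by
        apply mul_le_mul_of_nonneg_left hinv (by positivity)
    _ ≤ 0.2 * t := by nlinarith [hδn]

theorem j_linear_taylor_at_2i_and_sqrt3i (δ : ℂ) (hδ : ‖δ‖ ≤ 2 ^ (-(28 : ℤ))) :
    ‖klj (2 * Complex.I + δ) - klj (2 * Complex.I) -
        deriv klj (2 * Complex.I) * δ‖ ≤ 0.2 * ‖δ‖ ∧
    ‖klj (Complex.I * Real.sqrt 3 + δ) - klj (Complex.I * Real.sqrt 3) -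
        deriv klj (Complex.I * Real.sqrt 3) * δ‖ ≤ 0.2 * ‖δ‖ := by
  constructor
  · apply main_est ?_ ?_ hδ
    · simp; norm_num
    · simp
  · have him : (Complex.I * (Real.sqrt 3 : ℝ)).im = Real.sqrt 3 := by simp
    have hs3 : (Real.sqrt 3) ^ 2 = 3 := Real.sq_sqrt (by norm_num)
    have hs0 : (0:ℝ) ≤ Real.sqrt 3 := Real.sqrt_nonneg 3
    apply main_est ?_ ?_ hδ
    · rw [him]; nlinarith
    · rw [him]; nlinarith
end

section
/- Let τ ∈ F. (a) If τ = i + δ with |δ| ≤ 2^{−30}, then |2τ − (−2/τ)| ≥ 3.99·|δ|, the point 1 − 2/(τ+1) satisfies |(1 − 2/(τ+1)) − i| ≤ 2|δ|, and any point w with |w − i| ≤ 2^{−28} satisfies |w − 2τ| ≥ 0.99 and |w − (−2/τ)| ≥ 0.99. (b) If τ = (1+i√3)/2 + δ with |δ| ≤ 2^{−30}, then the three points 2τ−1, 1−2/τ, and −1−2/(τ−1) are pairwise at distance at least 3.46·|δ| from each other. -/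
open Complex Real Filter

lemma tri_aux (z w : ℂ) : ‖z‖ - ‖w‖ ≤ ‖z + w‖ := by
  have h := norm_add_le (z + w) (-w)
  simp at h; linarith

set_option maxHeartbeats 1000000 in
theorem preimage_separation (τ : ℂ) (hτ : τ ∈ Fdom) :
    (∀ δ : ℂ, τ = Complex.I + δ → ‖δ‖ ≤ 2 ^ (-(30 : ℤ)) →
      3.99 * ‖δ‖ ≤ ‖2 * τ - (-2 / τ)‖ ∧
      ‖(1 - 2 / (τ + 1)) - Complex.I‖ ≤ 2 * ‖δ‖ ∧
      (∀ w : ℂ, ‖w - Complex.I‖ ≤ 2 ^ (-(28 : ℤ)) →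
        0.99 ≤ ‖w - 2 * τ‖ ∧ 0.99 ≤ ‖w - (-2 / τ)‖)) ∧
    (∀ δ : ℂ, τ = (1 + Complex.I * Real.sqrt 3) / 2 + δ → ‖δ‖ ≤ 2 ^ (-(30 : ℤ)) →
      3.46 * ‖δ‖ ≤ ‖(2 * τ - 1) - (1 - 2 / τ)‖ ∧
      3.46 * ‖δ‖ ≤ ‖(2 * τ - 1) - (-1 - 2 / (τ - 1))‖ ∧
      3.46 * ‖δ‖ ≤ ‖(1 - 2 / τ) - (-1 - 2 / (τ - 1))‖) := by
  constructor
  · -- Part (a): τ near i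
    intro δ h hd0
    have hd : ‖δ‖ ≤ 0.001 := le_trans hd0 (by norm_num)
    have ha0 : 0 ≤ ‖δ‖ := norm_nonneg δ
    have hτlo : 0.999 ≤ ‖τ‖ := by
      have := tri_aux Complex.I δ
      rw [← h, Complex.norm_I] at this; linarith
    have hτ0 : τ ≠ 0 := by
      intro h0; rw [h0] at hτlo; simp at hτlo; linarith
    have hτpos : (0:ℝ) < ‖τ‖ := norm_pos_iff.mpr hτ0
    have habs : ‖τ‖ ≤ 1.001 := by
      rw [h]
      calc ‖Complex.I + δ‖ ≤ ‖Complex.I‖ + ‖δ‖ :=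
        norm_add_le _ _
      _ ≤ 1.001 := by rw [Complex.norm_I]; linarith
    have hδeq : δ = τ - Complex.I := by rw [h]; ring
    refine ⟨?_, ?_, ?_⟩
    · -- 3.99 |δ| ≤ |2τ + 2/τ|
      have hne : Complex.I + δ ≠ 0 := h ▸ hτ0
      have key : 2 * τ - (-2 / τ) = 2 * δ * (2 * Complex.I + δ) / τ := by
        rw [h]; field_simp
        linear_combination (1 : ℂ) * Complex.I_sq
      rw [key, norm_div, norm_mul, norm_mul, le_div_iff₀ hτpos]
      have h2 : (1.999 : ℝ) ≤ ‖2 * Complex.I + δ‖ := by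
        have := tri_aux (2 * Complex.I) δ
        rw [norm_mul, Complex.norm_two, Complex.norm_I] at this; linarith
      rw [Complex.norm_two]
      nlinarith
    · -- |1 - 2/(τ+1) - i| ≤ 2|δ|
      have hsqrt2 : Real.sqrt 2 ^ 2 = 2 := Real.sq_sqrt (by norm_num)
      have hsqrt2nn : 0 ≤ Real.sqrt 2 := Real.sqrt_nonneg 2
      have hs2lo : 1.414 ≤ Real.sqrt 2 := by nlinarith
      have hs2hi : Real.sqrt 2 ≤ 1.5 := by nlinarith
      have habs1I : ‖1 + Complex.I‖ = Real.sqrt 2 := by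
        rw [Complex.norm_def, Complex.normSq_apply]; norm_num
      have habs1I' : ‖1 - Complex.I‖ = Real.sqrt 2 := by
        rw [Complex.norm_def, Complex.normSq_apply]; norm_num
      have hτ1lo : 1.4 ≤ ‖τ + 1‖ := by
        have heq : (1 + Complex.I) + δ = τ + 1 := by rw [h]; ring
        have := tri_aux (1 + Complex.I) δ
        rw [heq, habs1I] at this; linarith
      have hτ1pos : (0:ℝ) < ‖τ + 1‖ := by linarith
      have hne1 : τ + 1 ≠ 0 := by
        intro h0; rw [h0] at hτ1lo; simp at hτ1lo; linarith
      have key : ((1 : ℂ) - 2/(τ+1)) - Complex.I = ((1 - Complex.I) * δ) / (τ + 1) := by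
        rw [hδeq]; field_simp
        linear_combination (-1 : ℂ) * Complex.I_sq
      rw [key, norm_div, norm_mul, habs1I', div_le_iff₀ hτ1pos]
      nlinarith
    · -- points near i are far from 2τ and -2/τ
      intro w hw0
      have hw : ‖w - Complex.I‖ ≤ 0.001 := le_trans hw0 (by norm_num)
      have hw0' : 0 ≤ ‖w - Complex.I‖ := norm_nonneg _
      constructor
      · have e1 : -Complex.I = (w - 2*τ) + (-(w - Complex.I) + (2*δ)) := by
          rw [h]; ring
        have t1 : ‖-(w - Complex.I) + (2*δ)‖ ≤ 0.003 := by
          calc ‖-(w - Complex.I) + (2*δ)‖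
              ≤ ‖-(w - Complex.I)‖ + ‖2*δ‖ :=
            norm_add_le _ _
          _ = ‖w - Complex.I‖ + 2 * ‖δ‖ := by
            rw [norm_neg, norm_mul, Complex.norm_two]
          _ ≤ 0.003 := by linarith
        have t2 : (1:ℝ) ≤ ‖w - 2*τ‖ + ‖-(w - Complex.I) + (2*δ)‖ := by
          calc (1:ℝ) = ‖-Complex.I‖ := by simp
          _ = ‖(w - 2*τ) + (-(w - Complex.I) + (2*δ))‖ := by rw [← e1]
          _ ≤ _ := norm_add_le _ _
        linarith
      · have e2 : -Complex.I = (w - (-2/τ)) + (-(w - Complex.I) + (-2*Complex.I*δ/τ)) := by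
          rw [hδeq]; field_simp
          linear_combination (-2 : ℂ) * Complex.I_sq
        have t0 : ‖-2*Complex.I*δ/τ‖ ≤ 0.003 := by
          rw [norm_div, div_le_iff₀ hτpos]
          have : ‖-2*Complex.I*δ‖ = 2 * ‖δ‖ := by
            rw [norm_mul, norm_mul]; simp
          rw [this]; nlinarith
        have t1 : ‖-(w - Complex.I) + (-2*Complex.I*δ/τ)‖ ≤ 0.004 := by
          calc ‖-(w - Complex.I) + (-2*Complex.I*δ/τ)‖
              ≤ ‖-(w - Complex.I)‖ + ‖-2*Complex.I*δ/τ‖ :=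
            norm_add_le _ _
          _ ≤ 0.004 := by rw [norm_neg]; linarith
        have t2 : (1:ℝ) ≤ ‖w - (-2/τ)‖ +
            ‖-(w - Complex.I) + (-2*Complex.I*δ/τ)‖ := by
          calc (1:ℝ) = ‖-Complex.I‖ := by simp
          _ = ‖(w - (-2/τ)) + (-(w - Complex.I) + (-2*Complex.I*δ/τ))‖ := by
            rw [← e2]
          _ ≤ _ := norm_add_le _ _
        linarith
  · -- Part (b): τ near ρ = (1+i√3)/2
    intro δ h hd0
    have hd : ‖δ‖ ≤ 1e-9 := le_trans hd0 (by norm_num)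
    have ha0 : 0 ≤ ‖δ‖ := norm_nonneg δ
    have hs : Real.sqrt 3 ^ 2 = 3 := Real.sq_sqrt (by norm_num)
    have hsnn : 0 ≤ Real.sqrt 3 := Real.sqrt_nonneg 3
    have hs_lo : 1.732 ≤ Real.sqrt 3 := by nlinarith
    have hsC : ((Real.sqrt 3 : ℝ) : ℂ)^2 = 3 := by
      rw [← Complex.ofReal_pow, hs]; norm_num
    have habs1 : ‖1 + Complex.I * (Real.sqrt 3 : ℝ)‖ = 2 := by
      rw [Complex.norm_def, Complex.normSq_apply]
      simp
      rw [show (1:ℝ) + 3 = 2^2 by norm_num, Real.sqrt_sq (by norm_num)]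
    have habs2 : ‖-1 + Complex.I * (Real.sqrt 3 : ℝ)‖ = 2 := by
      rw [Complex.norm_def, Complex.normSq_apply]
      simp
      rw [show (1:ℝ) + 3 = 2^2 by norm_num, Real.sqrt_sq (by norm_num)]
    have habsρ : ‖(1 + Complex.I * (Real.sqrt 3 : ℝ))/2‖ = 1 := by
      rw [norm_div, habs1, Complex.norm_two]; norm_num
    have habsρ' : ‖(-1 + Complex.I * (Real.sqrt 3 : ℝ))/2‖ = 1 := by
      rw [norm_div, habs2, Complex.norm_two]; norm_num
    have hτhi : ‖τ‖ ≤ 1 + 1e-9 := by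
      rw [h]
      calc ‖(1 + Complex.I * (Real.sqrt 3 : ℝ))/2 + δ‖
          ≤ ‖(1 + Complex.I * (Real.sqrt 3 : ℝ))/2‖ + ‖δ‖ :=
        norm_add_le _ _
      _ ≤ 1 + 1e-9 := by rw [habsρ]; linarith
    have hτlo : 0.9 ≤ ‖τ‖ := by
      have := tri_aux ((1 + Complex.I * (Real.sqrt 3 : ℝ))/2) δ
      rw [← h, habsρ] at this; linarith
    have hτ0 : τ ≠ 0 := by
      intro h0; rw [h0] at hτlo; simp at hτlo; linarith
    have hτpos : (0:ℝ) < ‖τ‖ := norm_pos_iff.mpr hτ0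
    have heq1 : τ - 1 = (-1 + Complex.I * (Real.sqrt 3 : ℝ))/2 + δ := by rw [h]; ring
    have hτ1hi : ‖τ - 1‖ ≤ 1 + 1e-9 := by
      rw [heq1]
      calc ‖(-1 + Complex.I * (Real.sqrt 3 : ℝ))/2 + δ‖
          ≤ ‖(-1 + Complex.I * (Real.sqrt 3 : ℝ))/2‖ + ‖δ‖ :=
        norm_add_le _ _
      _ ≤ 1 + 1e-9 := by rw [habsρ']; linarith
    have hτ1lo : 0.9 ≤ ‖τ - 1‖ := by
      have := tri_aux ((-1 + Complex.I * (Real.sqrt 3 : ℝ))/2) δ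
      rw [← heq1, habsρ'] at this; linarith
    have hτ10 : τ - 1 ≠ 0 := by
      intro h0; rw [h0] at hτ1lo; simp at hτ1lo; linarith
    have hτ1pos : (0:ℝ) < ‖τ - 1‖ := norm_pos_iff.mpr hτ10
    have hq : τ^2 - τ + 1 = δ * (δ + Complex.I * (Real.sqrt 3 : ℝ)) := by
      rw [h]
      linear_combination (-(1/4) : ℂ) * hsC +
        ((((Real.sqrt 3 : ℝ) : ℂ))^2/4 : ℂ) * Complex.I_sq
    have hnum : 1.7319 ≤ ‖δ + Complex.I * (Real.sqrt 3 : ℝ)‖ := by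
      have hIs : ‖Complex.I * (Real.sqrt 3 : ℝ)‖ = Real.sqrt 3 := by
        rw [norm_mul, Complex.norm_I, one_mul, Complex.norm_real, Real.norm_eq_abs, _root_.abs_of_nonneg hsnn]
      have := tri_aux (Complex.I * (Real.sqrt 3 : ℝ)) δ
      rw [add_comm, hIs] at this; linarith
    have hqabs : ‖τ^2 - τ + 1‖ = ‖δ‖ *
        ‖δ + Complex.I * (Real.sqrt 3 : ℝ)‖ := by
      rw [hq, norm_mul]
    refine ⟨?_, ?_, ?_⟩
    · have key : (2*τ-1) - (1-2/τ) = 2*(τ^2-τ+1)/τ := by field_simp; ring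
      rw [key, norm_div, norm_mul, Complex.norm_two, hqabs, le_div_iff₀ hτpos]
      nlinarith [mul_le_mul_of_nonneg_left hτhi ha0, mul_le_mul_of_nonneg_left hnum ha0]
    · have key : (2*τ-1) - (-1-2/(τ-1)) = 2*(τ^2-τ+1)/(τ-1) := by
        field_simp; ring
      rw [key, norm_div, norm_mul, Complex.norm_two, hqabs, le_div_iff₀ hτ1pos]
      nlinarith [mul_le_mul_of_nonneg_left hτ1hi ha0, mul_le_mul_of_nonneg_left hnum ha0]
    · have key : (1-2/τ) - (-1-2/(τ-1)) = 2*(τ^2-τ+1)/(τ*(τ-1)) := by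
        field_simp; ring
      have hppos : (0:ℝ) < ‖τ*(τ-1)‖ := by
        rw [norm_mul]; positivity
      rw [key, norm_div, norm_mul, Complex.norm_two, hqabs, le_div_iff₀ hppos]
      rw [norm_mul]
      have hprod : ‖τ‖ * ‖τ-1‖ ≤ 1.0001 := by
        have h1 : ‖τ‖ * ‖τ-1‖ ≤ (1+1e-9) * (1+1e-9) :=
          mul_le_mul hτhi hτ1hi (norm_nonneg _) (by norm_num)
        linarith
      have c1 : ‖δ‖ * (‖τ‖ * ‖τ-1‖) ≤
          ‖δ‖ * 1.0001 := mul_le_mul_of_nonneg_left hprod ha0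
      have c2 : ‖δ‖ * 1.7319 ≤
          ‖δ‖ * ‖δ + Complex.I * (Real.sqrt 3 : ℝ)‖ :=
        mul_le_mul_of_nonneg_left hnum ha0
      linarith only [c1, c2, hd, ha0]
end
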